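/- arXiv:2202.04588 — 9 statements merged into one kernel-verified Lean document; each statement's English description precedes it below -/
import Mathlib

section
/- Let G be a finite abelian group of order v and let 𝓑 be a set of k-element subsets of G, with 2 ≤ k ≤ v, such that every pair of distinct elements of G lies in exactly one member of 𝓑 and every member of 𝓑 sums to zero in G. Then the sum of all elements of G is zero, and every prime dividing v also divides k (i.e., rad(v) divides k). -/
/-- If `𝓑` is a strictly `G`-additive 2-(v,k,1) design on a finite abelian group `G`
of order `v`, then `G` is zero-sum and every prime dividing `v` divides `k`
(i.e. `rad v ∣ k`). -/
theorem stmt_3 (G : Type*) [AddCommGroup G] [Fintype G] (v k : ℕ)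
    (hv : Fintype.card G = v) (hk2 : 2 ≤ k) (hkv : k ≤ v)
    (𝓑 : Finset (Finset G))
    (hcard : ∀ B ∈ 𝓑, B.card = k)
    (hpair : ∀ x y : G, x ≠ y → ∃! B, B ∈ 𝓑 ∧ x ∈ B ∧ y ∈ B)
    (hzs : ∀ B ∈ 𝓑, ∑ x ∈ B, x = 0) :
    (∑ g : G, g = 0) ∧ ∀ p : ℕ, p.Prime → p ∣ v → p ∣ k := by
  classical
  set S : G := ∑ g : G, g with hS
  set F : G → Finset (Finset G) := fun x => 𝓑.filter (fun B => x ∈ B) with hF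
  have key : ∀ x : G, (F x).biUnion (fun B => B.erase x) = Finset.univ.erase x := by
    intro x
    ext y
    simp only [hF, Finset.mem_biUnion, Finset.mem_filter, Finset.mem_erase, Finset.mem_univ,
      and_true]
    constructor
    · rintro ⟨B, ⟨hB, hx⟩, hy, hyB⟩
      exact hy
    · intro hy
      obtain ⟨B, ⟨hB, hx, hyB⟩, -⟩ := hpair x y (Ne.symm hy)
      exact ⟨B, ⟨hB, hx⟩, hy, hyB⟩
  have disj : ∀ x : G, Set.PairwiseDisjoint ((F x) : Set (Finset G)) (fun B => B.erase x) := by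
    intro x B hB B' hB' hne
    simp only [hF, Finset.coe_filter, Set.mem_setOf_eq, Finset.mem_filter] at hB hB'
    rw [Function.onFun, Finset.disjoint_left]
    intro y hyB hyB'
    rw [Finset.mem_erase] at hyB hyB'
    obtain ⟨C, -, huniq⟩ := hpair x y (Ne.symm hyB.1)
    exact hne ((huniq B ⟨hB.1, hB.2, hyB.2⟩).trans (huniq B' ⟨hB'.1, hB'.2, hyB'.2⟩).symm)
  -- counting: r * (k-1) = v - 1
  have hcount : ∀ x : G, (F x).card * (k - 1) = v - 1 := by
    intro x
    have h1 : ((F x).biUnion (fun B => B.erase x)).card = v - 1 := by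
      rw [key x, Finset.card_erase_of_mem (Finset.mem_univ x), Finset.card_univ, hv]
    rw [Finset.card_biUnion (fun B hB B' hB' hne => disj x (by exact_mod_cast hB)
      (by exact_mod_cast hB') hne)] at h1
    have h2 : ∀ B ∈ F x, (B.erase x).card = k - 1 := by
      intro B hB
      simp only [hF, Finset.mem_filter] at hB
      rw [Finset.card_erase_of_mem hB.2, hcard B hB.1]
    rw [Finset.sum_congr rfl h2, Finset.sum_const, smul_eq_mul] at h1
    exact h1
  -- sum identity: S - x = -( (F x).card • x )
  have hsum : ∀ x : G, S - x = -((F x).card • x) := by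
    intro x
    have h1 : ∑ y ∈ (F x).biUnion (fun B => B.erase x), y = S - x := by
      rw [key x, hS, eq_sub_iff_add_eq, add_comm]
      exact Finset.add_sum_erase Finset.univ (fun y => y) (Finset.mem_univ x)
    rw [Finset.sum_biUnion (disj x)] at h1
    have h2 : ∀ B ∈ F x, ∑ y ∈ B.erase x, y = -x := by
      intro B hB
      simp only [hF, Finset.mem_filter] at hB
      refine eq_neg_of_add_eq_zero_right ?_
      rw [Finset.add_sum_erase B (fun y => y) hB.2]
      exact hzs B hB.1
    rw [Finset.sum_congr rfl h2, Finset.sum_const, smul_neg] at h1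
    exact h1.symm
  have hS0 : S = 0 := by
    have := hsum 0
    simpa using this
  refine ⟨hS0, ?_⟩
  intro p hp hpv
  haveI : Fact p.Prime := ⟨hp⟩
  obtain ⟨x, hx⟩ := exists_prime_addOrderOf_dvd_card p (by rwa [hv])
  have hv2 : 2 ≤ v := le_trans hk2 hkv
  set r : ℕ := (F x).card with hr
  have hr1 : 1 ≤ r := by
    rcases Nat.eq_zero_or_pos r with h0 | h
    · exfalso
      have hc := hcount x
      rw [← hr, h0, zero_mul] at hc
      omega
    · exact h
  have hx1 : r • x = x := by
    have h := hsum x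
    rw [hS0, ← hr, zero_sub] at h
    exact (neg_inj.mp h).symm
  have hx2 : (r - 1) • x = 0 := by
    have h : (r - 1) • x + x = x := by
      rw [← succ_nsmul, Nat.sub_add_cancel hr1, hx1]
    exact add_right_cancel (h.trans (zero_add x).symm)
  have hpr : p ∣ r - 1 := by
    rw [← hx]
    exact addOrderOf_dvd_of_nsmul_eq_zero hx2
  have hcz : (r : ℤ) * ((k : ℤ) - 1) = (v : ℤ) - 1 := by
    have hc := hcount x
    rw [← hr] at hc
    have h2 : ((r * (k - 1) : ℕ) : ℤ) = ((v - 1 : ℕ) : ℤ) := by exact_mod_cast hc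
    push_cast [Nat.cast_sub (by omega : 1 ≤ k), Nat.cast_sub (by omega : 1 ≤ v)] at h2
    linarith
  have hprz : (p : ℤ) ∣ (r : ℤ) - 1 := by
    have h : ((r - 1 : ℕ) : ℤ) = (r : ℤ) - 1 := by
      rw [Nat.cast_sub hr1]; norm_num
    rw [← h]
    exact_mod_cast hpr
  have hpvz : (p : ℤ) ∣ (v : ℤ) := by exact_mod_cast hpv
  have hfin : (p : ℤ) ∣ (k : ℤ) := by
    have hk : (k : ℤ) = (v : ℤ) - ((r : ℤ) - 1) * ((k : ℤ) - 1) := by linear_combination hcz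
    rw [hk]
    exact dvd_sub hpvz (Dvd.dvd.mul_right hprz _)
  exact_mod_cast hfin
end

section
/- There is no strictly additive 2-(v,k,1) design with v ≡ 2 (mod 4): if G is a finite abelian group of order v with v ≡ 2 (mod 4), then there is no set 𝓑 of k-element subsets of G (2 ≤ k ≤ v) such that every pair of distinct elements of G lies in exactly one member of 𝓑 and every member of 𝓑 sums to zero in G. -/
lemma aux_unique_inv (G : Type*) [AddCommGroup G] [Fintype G]
    (h4 : ¬ (4 ∣ Fintype.card G)) {g ι : G} (hg : g + g = 0) (hι : ι + ι = 0)
    (hg0 : g ≠ 0) (hι0 : ι ≠ 0) : g = ι := by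
  classical
  by_contra hne
  have hng : -g = g := neg_eq_of_add_eq_zero_left hg
  have hnι : -ι = ι := neg_eq_of_add_eq_zero_left hι
  have h1 : g + ι ≠ 0 := by
    intro h; exact hne ((eq_neg_of_add_eq_zero_left h).trans hnι)
  have h2 : g + ι ≠ g := fun h => hι0 (by rwa [add_eq_left] at h)
  have h3 : g + ι ≠ ι := fun h => hg0 (by rwa [add_eq_right] at h)
  have hgι : (g + ι) + (g + ι) = 0 := by
    rw [add_add_add_comm, hg, hι, add_zero]
  have hngι : -(g + ι) = g + ι := neg_eq_of_add_eq_zero_left hgι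
  have hA : g + (g + ι) = ι := by rw [← add_assoc, hg, zero_add]
  have hB : ι + (g + ι) = g := by rw [add_comm g ι, ← add_assoc, hι, zero_add]
  set s : Set G := {0, g, ι, g + ι} with hs
  have hmem : ∀ x ∈ s, ∀ y ∈ s, x + y ∈ s := by
    rintro x (rfl | rfl | rfl | rfl) y (rfl | rfl | rfl | rfl) <;>
      simp only [hs, Set.mem_insert_iff, Set.mem_singleton_iff, zero_add, add_zero, hg, hι,
        hgι, hA, hB, eq_self_iff_true, true_or, or_true] <;>
      first
        | tauto
        | (rw [add_comm]; tauto)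
  have hneg : ∀ x ∈ s, -x ∈ s := by
    rintro x (rfl | rfl | rfl | rfl) <;>
      simp only [hs, Set.mem_insert_iff, Set.mem_singleton_iff, neg_zero, hng, hnι, hngι] <;> tauto
  let K : AddSubgroup G :=
    { carrier := s
      zero_mem' := by left; rfl
      add_mem' := fun ha hb => hmem _ ha _ hb
      neg_mem' := fun ha => hneg _ ha }
  have hcard : Nat.card K = 4 := by
    have h0 : Nat.card K = s.ncard := by rw [← Nat.card_coe_set_eq]; rfl
    rw [h0, hs]
    rw [Set.ncard_insert_of_notMem (by
          simp only [Set.mem_insert_iff, Set.mem_singleton_iff]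
          push_neg
          exact ⟨fun h => hg0 h.symm, fun h => hι0 h.symm, fun h => h1 h.symm⟩),
        Set.ncard_insert_of_notMem (by
          simp only [Set.mem_insert_iff, Set.mem_singleton_iff]
          push_neg
          exact ⟨hne, fun h => h2 h.symm⟩),
        Set.ncard_insert_of_notMem (by
          simp only [Set.mem_singleton_iff]
          exact fun h => h3 h.symm),
        Set.ncard_singleton]
  have hdvd := AddSubgroup.card_addSubgroup_dvd_card K
  rw [hcard, Nat.card_eq_fintype_card] at hdvd
  exact h4 hdvd


/-- There is no strictly additive 2-(v,k,1) design with `v ≡ 2 (mod 4)`. -/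
theorem stmt_4 (G : Type*) [AddCommGroup G] [Fintype G] (v k : ℕ)
    (hv : Fintype.card G = v) (hv4 : v % 4 = 2) (hk2 : 2 ≤ k) (hkv : k ≤ v) :
    ¬ ∃ 𝓑 : Finset (Finset G),
        (∀ B ∈ 𝓑, B.card = k) ∧
        (∀ x y : G, x ≠ y → ∃! B, B ∈ 𝓑 ∧ x ∈ B ∧ y ∈ B) ∧
        (∀ B ∈ 𝓑, ∑ x ∈ B, x = 0) := by
  classical
  rintro ⟨𝓑, hBcard, hpair, hBsum⟩
  have hv2 : 2 ∣ Fintype.card G := by rw [hv]; omega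
  have h4 : ¬ (4 ∣ Fintype.card G) := by rw [hv]; omega
  obtain ⟨ι, hιord⟩ := exists_prime_addOrderOf_dvd_card 2 hv2
  have hι0 : ι ≠ 0 := by intro h; rw [h, addOrderOf_zero] at hιord; omega
  have hι2 : ι + ι = 0 := by
    have h := addOrderOf_nsmul_eq_zero ι
    rwa [hιord, two_nsmul] at h
  -- the sum of all elements of G is ι
  have hS : ∑ x : G, x = ι := by
    have hT : Finset.univ.filter (fun g : G => g + g = 0) = ({0, ι} : Finset G) := by
      ext x
      simp only [Finset.mem_filter, Finset.mem_univ, true_and, Finset.mem_insert,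
        Finset.mem_singleton]
      constructor
      · intro hx
        rcases eq_or_ne x 0 with h | h
        · exact Or.inl h
        · exact Or.inr (aux_unique_inv G h4 hx hι2 h hι0)
      · rintro (rfl | rfl)
        · simp
        · exact hι2
    have hnot : ∑ x ∈ Finset.univ.filter (fun g : G => ¬ g + g = 0), x = 0 := by
      refine Finset.sum_involution (fun a _ => -a) (fun a _ => add_neg_cancel a) ?_ ?_ ?_
      · intro a ha _ h
        rw [Finset.mem_filter] at ha
        exact ha.2 (by nth_rewrite 2 [← h]; exact add_neg_cancel a)
      · intro a ha
        rw [Finset.mem_filter] at ha ⊢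
        refine ⟨Finset.mem_univ _, fun h => ha.2 ?_⟩
        rw [← neg_add] at h
        exact neg_eq_zero.1 h
      · intro a ha; exact neg_neg a
    calc ∑ x : G, x
        = (∑ x ∈ Finset.univ.filter (fun g : G => g + g = 0), x)
          + ∑ x ∈ Finset.univ.filter (fun g : G => ¬ g + g = 0), x :=
          (Finset.sum_filter_add_sum_filter_not _ _ _).symm
      _ = ι := by rw [hT, hnot, add_zero, Finset.sum_pair (fun h => hι0 h.symm), zero_add]
  -- replication count
  set r : G → ℕ := fun x => (𝓑.filter (fun B => x ∈ B)).card with hr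
  have hrep : ∀ x : G, r x * (k - 1) = v - 1 := by
    intro x
    have hdisj : ∀ B1 ∈ 𝓑.filter (fun B => x ∈ B), ∀ B2 ∈ 𝓑.filter (fun B => x ∈ B),
        B1 ≠ B2 → Disjoint (B1.erase x) (B2.erase x) := by
      intro B1 h1 B2 h2 hne
      rw [Finset.mem_filter] at h1 h2
      rw [Finset.disjoint_left]
      intro y hy1 hy2
      rw [Finset.mem_erase] at hy1 hy2
      obtain ⟨Bu, -, hu⟩ := hpair x y (Ne.symm hy1.1)
      exact hne ((hu B1 ⟨h1.1, h1.2, hy1.2⟩).trans (hu B2 ⟨h2.1, h2.2, hy2.2⟩).symm)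
    have hcov : (𝓑.filter (fun B => x ∈ B)).biUnion (fun B => B.erase x)
        = Finset.univ.erase x := by
      ext y
      simp only [Finset.mem_biUnion, Finset.mem_filter, Finset.mem_erase, Finset.mem_univ,
        and_true]
      constructor
      · rintro ⟨B, ⟨-, -⟩, hy, -⟩; exact hy
      · intro hyx
        obtain ⟨B, ⟨hB, hxB, hyB⟩, -⟩ := hpair x y (Ne.symm hyx)
        exact ⟨B, ⟨hB, hxB⟩, hyx, hyB⟩
    have hcb := Finset.card_biUnion hdisj
    rw [hcov, Finset.card_erase_of_mem (Finset.mem_univ x), Finset.card_univ, hv] at hcb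
    have hsum2 : ∑ B ∈ 𝓑.filter (fun B => x ∈ B), (B.erase x).card
        = ∑ _B ∈ 𝓑.filter (fun B => x ∈ B), (k - 1) :=
      Finset.sum_congr rfl fun B hB => by
        rw [Finset.card_erase_of_mem (Finset.mem_filter.1 hB).2,
          hBcard B (Finset.mem_filter.1 hB).1]
    rw [hsum2, Finset.sum_const, smul_eq_mul] at hcb
    exact hcb.symm
  -- double counting the total sum
  have hzero : ∑ B ∈ 𝓑, ∑ x ∈ B, x = 0 := Finset.sum_eq_zero hBsum
  have hswap : ∑ B ∈ 𝓑, ∑ x ∈ B, x = ∑ x : G, (r x) • x := by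
    calc ∑ B ∈ 𝓑, ∑ x ∈ B, x
        = ∑ B ∈ 𝓑, ∑ x ∈ Finset.univ, if x ∈ B then x else 0 := by
          refine Finset.sum_congr rfl fun B _ => ?_
          rw [Finset.sum_ite_mem, Finset.univ_inter]
      _ = ∑ x ∈ Finset.univ, ∑ B ∈ 𝓑, if x ∈ B then x else 0 := Finset.sum_comm
      _ = ∑ x : G, (r x) • x := by
          refine Finset.sum_congr rfl fun x _ => ?_
          rw [← Finset.sum_filter, Finset.sum_const]
  -- all replication numbers are equal and odd
  have hk1 : 0 < k - 1 := by omega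
  have hrconst : ∀ x : G, r x = r ι := fun x =>
    Nat.eq_of_mul_eq_mul_right hk1 ((hrep x).trans (hrep ι).symm)
  have hodd : Odd (r ι) := by
    have h1 := hrep ι
    have hvodd : Odd (v - 1) := ⟨(v - 2) / 2, by omega⟩
    rw [← h1] at hvodd
    exact (Nat.odd_mul.1 hvodd).1
  obtain ⟨q, hq⟩ := hodd
  have hfinal : (0 : G) = ι := by
    calc (0 : G) = ∑ x : G, (r x) • x := hzero ▸ hswap.symm ▸ rfl
      _ = ∑ x : G, (r ι) • x := Finset.sum_congr rfl fun x _ => by rw [hrconst x]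
      _ = (r ι) • ∑ x : G, x := (Finset.smul_sum).symm
      _ = (r ι) • ι := by rw [hS]
      _ = ι := by
          rw [hq, add_nsmul, one_nsmul, mul_nsmul, two_nsmul, hι2, smul_zero, zero_add]
  exact hι0 hfinal.symm
end

section
/- Let G be a finite abelian group of order v and let 𝓑 be a G-regular 2-(v,k,1) design on G with 2 ≤ k ≤ v. Then v ≡ 1 (mod k(k−1)) or v ≡ k (mod k(k−1)). -/
open Finset
set_option linter.unusedSectionVars false

namespace Stmt5Aux

variable {G : Type*} [AddCommGroup G] [Fintype G] [DecidableEq G]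

/-- translate of a block -/
def tr (g : G) (B : Finset G) : Finset G := B.image (· + g)

lemma mem_tr {g x : G} {B : Finset G} : x ∈ tr g B ↔ x - g ∈ B := by
  simp only [tr, Finset.mem_image]
  constructor
  · rintro ⟨a, ha, rfl⟩; simpa using ha
  · intro h; exact ⟨x - g, h, by abel⟩

lemma tr_tr {g h : G} {B : Finset G} : tr g (tr h B) = tr (h + g) B := by
  ext x; simp only [mem_tr]; rw [sub_sub, add_comm g h]

lemma tr_zero {B : Finset G} : tr 0 B = B := by
  ext x; simp [mem_tr]

lemma card_tr {g : G} {B : Finset G} : (tr g B).card = B.card :=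
  Finset.card_image_of_injective _ (add_left_injective g)

/-- stabilizer of a block, as a finset -/
def stab (B : Finset G) : Finset G := univ.filter (fun g => tr g B = B)

lemma mem_stab {g : G} {B : Finset G} : g ∈ stab B ↔ tr g B = B := by
  simp [stab]

lemma zero_mem_stab {B : Finset G} : (0 : G) ∈ stab B := mem_stab.mpr tr_zero

lemma add_mem_stab {s u : G} {B : Finset G} (hs : s ∈ stab B) (hu : u ∈ stab B) :
    s + u ∈ stab B := by
  rw [mem_stab] at *
  rw [← tr_tr, hs, hu]

lemma neg_mem_stab {s : G} {B : Finset G} (hs : s ∈ stab B) : -s ∈ stab B := by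
  rw [mem_stab] at *
  conv_lhs => rw [← hs]
  rw [tr_tr, add_neg_cancel, tr_zero]

lemma sub_mem_stab {s u : G} {B : Finset G} (hs : s ∈ stab B) (hu : u ∈ stab B) :
    s - u ∈ stab B := by
  rw [sub_eq_add_neg]; exact add_mem_stab hs (neg_mem_stab hu)

lemma add_mem_of_mem_stab {b s : G} {B : Finset G} (hb : b ∈ B) (hs : s ∈ stab B) :
    b + s ∈ B := by
  rw [← mem_stab.mp hs]
  rw [mem_tr]; simpa using hb

/-- orbit of a block -/
def orb (B : Finset G) : Finset (Finset G) := univ.image (fun g => tr g B)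

lemma mem_orb_self {B : Finset G} : B ∈ orb B := by
  refine Finset.mem_image.mpr ⟨0, mem_univ _, tr_zero⟩

lemma mem_orb {B C : Finset G} : C ∈ orb B ↔ ∃ g, tr g B = C := by
  simp [orb]

lemma stab_tr {g : G} {B : Finset G} : stab (tr g B) = stab B := by
  ext d
  simp only [mem_stab]
  constructor
  · intro h
    have : tr (-g) (tr d (tr g B)) = tr (-g) (tr g B) := by rw [h]
    rw [tr_tr, tr_tr, tr_tr, add_neg_cancel, tr_zero] at this
    rw [← this]
    congr 1
    abel
  · intro h
    rw [tr_tr, add_comm g d, ← tr_tr, h]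

lemma orb_tr {g : G} {B : Finset G} : orb (tr g B) = orb B := by
  ext C
  simp only [mem_orb]
  constructor
  · rintro ⟨h, rfl⟩; exact ⟨g + h, (tr_tr).symm⟩
  · rintro ⟨h, rfl⟩
    exact ⟨h - g, by rw [tr_tr]; congr 1; abel⟩

lemma orb_eq_of_mem {B C : Finset G} (h : C ∈ orb B) : orb C = orb B := by
  obtain ⟨g, rfl⟩ := mem_orb.mp h
  exact orb_tr

/-- the stabilizer's card divides the block's card -/
lemma stab_card_dvd (B : Finset G) : (stab B).card ∣ B.card := by
  classical
  set cos : G → Finset G := fun b => (stab B).image (fun s => b + s) with hcos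
  have hcard : ∀ b : G, (cos b).card = (stab B).card := by
    intro b
    exact Finset.card_image_of_injective _ (add_right_injective b)
  have hcos_eq : ∀ b : G, ∀ x ∈ cos b, cos x = cos b := by
    intro b x hx
    obtain ⟨s, hs, rfl⟩ := Finset.mem_image.mp hx
    ext y
    simp only [hcos, Finset.mem_image]
    constructor
    · rintro ⟨u, hu, rfl⟩
      exact ⟨s + u, add_mem_stab hs hu, by abel⟩
    · rintro ⟨u, hu, rfl⟩
      exact ⟨u - s, sub_mem_stab hu hs, by abel⟩
  have key : B.card = ∑ C ∈ B.image cos, (B.filter (fun b => cos b = C)).card :=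
    Finset.card_eq_sum_card_fiberwise (fun b hb => Finset.mem_image_of_mem _ hb)
  have hfib : ∀ C ∈ B.image cos, (B.filter (fun b => cos b = C)).card = (stab B).card := by
    intro C hC
    obtain ⟨b, hb, rfl⟩ := Finset.mem_image.mp hC
    have : B.filter (fun b' => cos b' = cos b) = cos b := by
      ext x
      simp only [Finset.mem_filter]
      constructor
      · rintro ⟨-, h⟩
        rw [← h]
        exact Finset.mem_image.mpr ⟨0, zero_mem_stab, by simp⟩
      · intro hx
        refine ⟨?_, hcos_eq b x hx⟩
        obtain ⟨s, hs, rfl⟩ := Finset.mem_image.mp hx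
        exact add_mem_of_mem_stab hb hs
    rw [this, hcard]
  rw [Finset.sum_congr rfl hfib, Finset.sum_const, smul_eq_mul] at key
  exact ⟨(B.image cos).card, by rw [key, mul_comm]⟩

/-- orbit–stabilizer -/
lemma orb_card_mul_stab_card (B : Finset G) :
    (orb B).card * (stab B).card = Fintype.card G := by
  classical
  have key : (univ : Finset G).card
      = ∑ C ∈ orb B, (univ.filter (fun g => tr g B = C)).card :=
    Finset.card_eq_sum_card_fiberwise (fun g _ => Finset.mem_image_of_mem _ (mem_univ g))
  have hfib : ∀ C ∈ orb B, (univ.filter (fun g => tr g B = C)).card = (stab B).card := by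
    intro C hC
    obtain ⟨g₀, rfl⟩ := mem_orb.mp hC
    have : univ.filter (fun g => tr g B = tr g₀ B) = (stab B).image (fun s => g₀ + s) := by
      ext g
      simp only [Finset.mem_filter, mem_univ, true_and, Finset.mem_image]
      constructor
      · intro h
        refine ⟨g - g₀, ?_, by abel⟩
        rw [mem_stab]
        have : tr (-g₀) (tr g B) = tr (-g₀) (tr g₀ B) := by rw [h]
        rw [tr_tr, tr_tr, add_neg_cancel, tr_zero] at this
        rw [← this]
        congr 1
        abel
      · rintro ⟨s, hs, rfl⟩
        rw [add_comm, ← tr_tr, mem_stab.mp hs]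
    rw [this]
    exact Finset.card_image_of_injective _ (add_right_injective g₀)
  rw [Finset.sum_congr rfl hfib, Finset.sum_const, smul_eq_mul] at key
  rw [← key]
  simp


lemma arith (v k n t : ℕ) (hk2 : 2 ≤ k) (hkv : k ≤ v)
    (hE : v - 1 = (n * k + t) * (k - 1))
    (ht : t = 0 ∨ (1 ≤ t ∧ k ∣ v)) :
    v ≡ 1 [MOD k * (k - 1)] ∨ v ≡ k [MOD k * (k - 1)] := by
  have hv1 : 1 ≤ v := by omega
  obtain ⟨k', rfl⟩ : ∃ k', k = k' + 1 := ⟨k - 1, by omega⟩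
  simp only [Nat.add_sub_cancel] at hE ⊢
  rcases ht with rfl | ⟨ht1, c, hc⟩
  · left
    refine ((Nat.modEq_iff_dvd' hv1).mpr ⟨n, ?_⟩).symm
    rw [hE]; ring
  · right
    set A := n * (k' + 1) + t with hA
    have hA1 : 1 ≤ A := ht1.trans (Nat.le_add_left t _)
    have hv' : v = A * k' + 1 := (Nat.sub_eq_iff_eq_add hv1).mp hE
    have h2 : (k' + 1) * c + A = (k' + 1) * A + 1 := by
      have h3 : (k' + 1) * c = A * k' + 1 := by rw [← hc, hv']
      rw [h3]; ring
    have hmul : (k' + 1) * (A - c) = (k' + 1) * A - (k' + 1) * c := Nat.mul_sub _ _ _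
    have key : A - 1 = (k' + 1) * (A - c) := by
      rw [hmul]
      generalize (k' + 1) * A = P at h2 ⊢
      generalize (k' + 1) * c = Q at h2 ⊢
      omega
    set j := A - c with hj
    have hAj : A = (k' + 1) * j + 1 := by
      generalize hP : (k' + 1) * j = P at key ⊢
      omega
    have hvk : v = (k' + 1) * k' * j + (k' + 1) := by
      rw [hv', hAj]; ring
    refine ((Nat.modEq_iff_dvd' hkv).mpr ⟨j, ?_⟩).symm
    rw [hvk, Nat.add_sub_cancel]

end Stmt5Aux

open Stmt5Aux

/-- A `G`-regular 2-(v,k,1) design can exist only if `v ≡ 1` or `v ≡ k (mod k(k-1))`. -/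
theorem stmt_5 (G : Type*) [AddCommGroup G] [Fintype G] [DecidableEq G] (v k : ℕ)
    (hv : Fintype.card G = v) (hk2 : 2 ≤ k) (hkv : k ≤ v)
    (𝓑 : Finset (Finset G))
    (hcard : ∀ B ∈ 𝓑, B.card = k)
    (hpair : ∀ x y : G, x ≠ y → ∃! B, B ∈ 𝓑 ∧ x ∈ B ∧ y ∈ B)
    (hreg : ∀ B ∈ 𝓑, ∀ g : G, B.image (· + g) ∈ 𝓑) :
    v ≡ 1 [MOD k * (k - 1)] ∨ v ≡ k [MOD k * (k - 1)] := by
  classical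
  have hv1 : 1 ≤ v := by omega
  have hk0 : 0 < k := by omega
  -- Step A : double counting pairs : v*v - v = |𝓑| * (k*k - k)
  have hex : ∀ p : G × G, p.1 ≠ p.2 → ∃ B, B ∈ 𝓑 ∧ p.1 ∈ B ∧ p.2 ∈ B :=
    fun p h => (hpair p.1 p.2 h).exists
  set f : G × G → Finset G := fun p => if h : p.1 ≠ p.2 then (hex p h).choose else ∅ with hf
  have hf_spec : ∀ (p : G × G) (h : p.1 ≠ p.2), f p ∈ 𝓑 ∧ p.1 ∈ f p ∧ p.2 ∈ f p := by
    intro p h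
    simp only [hf, dif_pos h]
    exact (hex p h).choose_spec
  have hP : (univ : Finset G).offDiag.card
      = ∑ B ∈ 𝓑, ((univ : Finset G).offDiag.filter (fun p => f p = B)).card := by
    apply Finset.card_eq_sum_card_fiberwise
    intro p hp
    exact (hf_spec p (Finset.mem_offDiag.mp hp).2.2).1
  have hfib : ∀ B ∈ 𝓑,
      ((univ : Finset G).offDiag.filter (fun p => f p = B)).card = k * k - k := by
    intro B hB
    have heq : (univ : Finset G).offDiag.filter (fun p => f p = B) = B.offDiag := by
      ext p
      simp only [Finset.mem_filter, Finset.mem_offDiag, mem_univ, true_and]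
      constructor
      · rintro ⟨hne, rfl⟩
        exact ⟨(hf_spec p hne).2.1, (hf_spec p hne).2.2, hne⟩
      · rintro ⟨h1, h2, hne⟩
        refine ⟨hne, ?_⟩
        obtain ⟨U, hU, hUuniq⟩ := hpair p.1 p.2 hne
        rw [hUuniq (f p) (hf_spec p hne), hUuniq B ⟨hB, h1, h2⟩]
    rw [heq, Finset.offDiag_card, hcard B hB]
  have hA : v * v - v = 𝓑.card * (k * k - k) := by
    have h := hP
    rw [Finset.sum_congr rfl hfib, Finset.sum_const, smul_eq_mul] at h
    rw [Finset.offDiag_card, Finset.card_univ, hv] at h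
    exact h
  -- Step B : stabilizers have card 1 or k
  have hstab : ∀ B ∈ 𝓑, (stab B).card = 1 ∨ (stab B).card = k := by
    intro B hB
    have hdvd : (stab B).card ∣ k := hcard B hB ▸ stab_card_dvd B
    by_cases h1 : (stab B).card = 1
    · exact Or.inl h1
    right
    have h0 : 0 < (stab B).card := Finset.card_pos.mpr ⟨0, zero_mem_stab⟩
    have h2 : 1 < (stab B).card := by omega
    obtain ⟨a, ha, b, hb, hab⟩ := Finset.one_lt_card.mp h2
    have hdS : a - b ∈ stab B := sub_mem_stab ha hb
    have hd0 : a - b ≠ 0 := sub_ne_zero.mpr hab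
    have horb𝓑 : ∀ C ∈ orb B, C ∈ 𝓑 := by
      intro C hC; obtain ⟨g, rfl⟩ := mem_orb.mp hC; exact hreg B hB g
    have hmemd : ∀ C ∈ orb B, ∀ x ∈ C, x + (a - b) ∈ C := by
      intro C hC x hx
      obtain ⟨g, rfl⟩ := mem_orb.mp hC
      exact add_mem_of_mem_stab hx (by rw [stab_tr]; exact hdS)
    have hdisj : ∀ C ∈ orb B, ∀ C' ∈ orb B, C ≠ C' → Disjoint C C' := by
      intro C hC C' hC' hne
      rw [Finset.disjoint_left]
      intro x hx hx'
      have hxd : x ≠ x + (a - b) := by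
        intro h
        exact hd0 (by simpa using h.symm)
      obtain ⟨U, hU, hUuniq⟩ := hpair x (x + (a - b)) hxd
      exact hne ((hUuniq C ⟨horb𝓑 C hC, hx, hmemd C hC x hx⟩).trans
        (hUuniq C' ⟨horb𝓑 C' hC', hx', hmemd C' hC' x hx'⟩).symm)
    have hle : (orb B).card * k ≤ v := by
      have hb1 : ((orb B).biUnion id).card = ∑ C ∈ orb B, C.card := Finset.card_biUnion hdisj
      have hb2 : ∑ C ∈ orb B, C.card = (orb B).card * k := by
        rw [Finset.sum_congr rfl (fun C hC => hcard C (horb𝓑 C hC)), Finset.sum_const,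
          smul_eq_mul]
      calc (orb B).card * k = ((orb B).biUnion id).card := by rw [hb1, hb2]
        _ ≤ Fintype.card G := Finset.card_le_univ _
        _ = v := hv
    have horbeq : (orb B).card * (stab B).card = v := by rw [orb_card_mul_stab_card, hv]
    have horbpos : 0 < (orb B).card := Finset.card_pos.mpr ⟨B, mem_orb_self⟩
    have hks : k ≤ (stab B).card :=
      Nat.le_of_mul_le_mul_left (hle.trans_eq horbeq.symm) horbpos
    exact le_antisymm (Nat.le_of_dvd hk0 hdvd) hks
  -- Step C : orbit sizes
  have hOcard : ∀ O ∈ 𝓑.image orb, O.card = v ∨ O.card * k = v := by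
    intro O hO
    obtain ⟨B, hB, rfl⟩ := Finset.mem_image.mp hO
    have horbeq : (orb B).card * (stab B).card = v := by rw [orb_card_mul_stab_card, hv]
    rcases hstab B hB with h | h
    · left; rw [h, mul_one] at horbeq; exact horbeq
    · right; rw [← h]; exact horbeq
  -- decomposition of 𝓑 into orbits
  have hdecomp : 𝓑.card = ∑ O ∈ 𝓑.image orb, O.card := by
    rw [Finset.card_eq_sum_card_fiberwise (fun B hB => Finset.mem_image_of_mem orb hB)]
    apply Finset.sum_congr rfl
    intro O hO
    obtain ⟨B, hB, rfl⟩ := Finset.mem_image.mp hO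
    congr 1
    ext C
    simp only [Finset.mem_filter]
    constructor
    · rintro ⟨hC, h⟩; exact h ▸ mem_orb_self
    · intro hC
      refine ⟨?_, orb_eq_of_mem hC⟩
      obtain ⟨g, rfl⟩ := mem_orb.mp hC
      exact hreg B hB g
  -- Step D : split into full and short orbits
  set orbs := 𝓑.image orb with horbs
  set n := (orbs.filter (fun O => O.card = v)).card with hn
  set t := (orbs.filter (fun O => ¬ O.card = v)).card with htdef
  have hsplit : ∑ O ∈ orbs, O.card * k = n * (v * k) + t * v := by
    rw [← Finset.sum_filter_add_sum_filter_not orbs (fun O => O.card = v)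
      (fun O => O.card * k)]
    have h1 : ∀ O ∈ orbs.filter (fun O => O.card = v), O.card * k = v * k :=
      fun O hO => by rw [(Finset.mem_filter.mp hO).2]
    have h2 : ∀ O ∈ orbs.filter (fun O => ¬ O.card = v), O.card * k = v := by
      intro O hO
      have hm := Finset.mem_filter.mp hO
      rcases hOcard O hm.1 with h | h
      · exact absurd h hm.2
      · exact h
    rw [Finset.sum_congr rfl h1, Finset.sum_congr rfl h2, Finset.sum_const, Finset.sum_const,
      smul_eq_mul, smul_eq_mul]
  have e2 : v * (v - 1) = v * ((n * k + t) * (k - 1)) := by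
    calc v * (v - 1) = v * v - v := by rw [Nat.mul_sub, mul_one]
      _ = 𝓑.card * (k * k - k) := hA
      _ = (∑ O ∈ orbs, O.card) * (k * (k - 1)) := by
          rw [hdecomp]; congr 1; rw [Nat.mul_sub, mul_one]
      _ = (∑ O ∈ orbs, O.card * k) * (k - 1) := by
          rw [Finset.sum_mul, Finset.sum_mul]
          exact Finset.sum_congr rfl fun O _ => by ring
      _ = (n * (v * k) + t * v) * (k - 1) := by rw [hsplit]
      _ = v * ((n * k + t) * (k - 1)) := by ring
  have hE : v - 1 = (n * k + t) * (k - 1) := Nat.eq_of_mul_eq_mul_left (by omega) e2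
  have ht : t = 0 ∨ (1 ≤ t ∧ k ∣ v) := by
    rcases Nat.eq_zero_or_pos t with h | h
    · exact Or.inl h
    · refine Or.inr ⟨h, ?_⟩
      obtain ⟨O, hO⟩ := Finset.card_pos.mp h
      have hm := Finset.mem_filter.mp hO
      rcases hOcard O hm.1 with h' | h'
      · exact absurd h' hm.2
      · exact ⟨O.card, by rw [← h', mul_comm]⟩
  exact arith v k n t hk2 hkv hE ht
end

section
/- Let G be a finite abelian group of order v and let 𝓑 be a G-super-regular 2-(v,k,1) design on G with 2 ≤ k ≤ v. Then: (i) kg = 0 for every g ∈ G (the order of every element of G divides k); (ii) v ≡ k (mod k(k−1)); (iii) rad(v) = rad(k); (iv) k ≢ 2 (mod 4). -/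
section Aux
variable {G : Type*} [AddCommGroup G] [DecidableEq G]

/-- translate of the finset `B` by `g` -/
def trG (g : G) (B : Finset G) : Finset G := B.image (· + g)

lemma trG_trG (g h : G) (B : Finset G) : trG h (trG g B) = trG (g + h) B := by
  unfold trG
  rw [Finset.image_image]
  apply Finset.image_congr
  intro x _
  simp [add_assoc]

lemma trG_zero (B : Finset G) : trG 0 B = B := by
  simp [trG]

lemma mem_trG_of_mem {g x : G} {B : Finset G} (hx : x ∈ B) : x + g ∈ trG g B :=
  Finset.mem_image_of_mem _ hx

lemma sum_trG (g : G) (B : Finset G) :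
    ∑ x ∈ trG g B, x = (∑ x ∈ B, x) + B.card • g := by
  rw [trG, Finset.sum_image (by intro a _ b _ h; exact add_right_cancel h)]
  rw [Finset.sum_add_distrib, Finset.sum_const]

/-- the set of translates of `B` through `0` -/
def orbG (B : Finset G) : Finset (Finset G) := B.image (fun x => trG (-x) B)

lemma orbG_trG (g : G) (B : Finset G) : orbG (trG g B) = orbG B := by
  unfold orbG
  simp only [trG_trG]
  rw [show trG g B = B.image (· + g) from rfl, Finset.image_image]
  apply Finset.image_congr
  intro z _
  simp only [Function.comp_apply]
  congr 1
  abel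

lemma klein_card_dvd {G : Type*} [AddCommGroup G] [Fintype G] (S : AddSubgroup G)
    (a b : G) (haS : a ∈ S) (hbS : b ∈ S) (ha2 : a + a = 0) (hb2 : b + b = 0)
    (ha0 : a ≠ 0) (hb0 : b ≠ 0) (hab : a ≠ b) : 4 ∣ Nat.card S := by
  have hab2 : (a + b) + (a + b) = 0 := by
    rw [add_add_add_comm, ha2, hb2, add_zero]
  have hna : -a = a := neg_eq_of_add_eq_zero_right ha2
  have hnb : -b = b := neg_eq_of_add_eq_zero_right hb2
  have hnab : -(a + b) = a + b := neg_eq_of_add_eq_zero_right hab2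
  have hab0 : a + b ≠ 0 := by
    intro h
    have : -a = b := neg_eq_of_add_eq_zero_right h
    exact hab (hna ▸ this)
  have haba : a + b ≠ a := by
    intro h
    apply hb0
    have := congrArg (fun t => -a + t) h
    simpa [← add_assoc, hna, ha2] using this
  have habb : a + b ≠ b := by
    intro h
    apply ha0
    have := congrArg (fun t => t + -b) h
    simpa [add_assoc, hnb, hb2] using this
  have e1 : a + (a + b) = b := by rw [← add_assoc, ha2, zero_add]
  have e2 : b + a = a + b := add_comm b a
  have e3 : b + (a + b) = a := by
    rw [add_comm a b, ← add_assoc, hb2, zero_add]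
  have e4 : (a + b) + a = b := by rw [add_comm (a+b) a, e1]
  have e5 : (a + b) + b = a := by rw [add_comm (a+b) b, e3]
  let V : AddSubgroup G :=
    { carrier := {0, a, b, a + b}
      zero_mem' := by left; rfl
      neg_mem' := by
        intro x hx
        rcases hx with rfl | rfl | rfl | rfl
        · simp only [neg_zero]; left; rfl
        · rw [hna]; right; left; rfl
        · rw [hnb]; right; right; left; rfl
        · rw [hnab]; right; right; right; rfl
      add_mem' := by
        intro x y hx hy
        simp only [Set.mem_insert_iff, Set.mem_singleton_iff] at hx hy ⊢
        rcases hx with rfl | rfl | rfl | rfl <;> rcases hy with rfl | rfl | rfl | rfl <;>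
          simp only [zero_add, add_zero, ha2, hb2, hab2, e1, e2, e3, e4, e5] <;> tauto }
  have hVcard : Nat.card V = 4 := by
    have hcoe : (V : Set G) = {0, a, b, a + b} := rfl
    rw [← SetLike.coe_sort_coe, Nat.card_coe_set_eq, hcoe]
    rw [Set.ncard_insert_of_notMem (by
      simp only [Set.mem_insert_iff, Set.mem_singleton_iff]
      push_neg
      exact ⟨Ne.symm ha0, Ne.symm hb0, Ne.symm hab0⟩)]
    rw [Set.ncard_insert_of_notMem (by
      simp only [Set.mem_insert_iff, Set.mem_singleton_iff]
      push_neg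
      exact ⟨hab, Ne.symm haba⟩)]
    rw [Set.ncard_insert_of_notMem (by
      simp only [Set.mem_singleton_iff]
      exact Ne.symm habb)]
    rw [Set.ncard_singleton]
  have hle : V ≤ S := by
    intro x hx
    rcases hx with rfl | rfl | rfl | rfl
    · exact S.zero_mem
    · exact haS
    · exact hbS
    · exact S.add_mem haS hbS
  have := AddSubgroup.card_dvd_of_le hle
  rwa [hVcard] at this

end Aux

/-- Necessary conditions for the existence of a `G`-super-regular 2-(v,k,1) design:
(i) the order of every element of `G` divides `k`; (ii) `v ≡ k (mod k(k-1))`;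
(iii) `rad v = rad k`; (iv) `k ≢ 2 (mod 4)`. -/
theorem stmt_7 (G : Type*) [AddCommGroup G] [Fintype G] [DecidableEq G] (v k : ℕ)
    (hv : Fintype.card G = v) (hk2 : 2 ≤ k) (hkv : k ≤ v)
    (𝓑 : Finset (Finset G))
    (hcard : ∀ B ∈ 𝓑, B.card = k)
    (hpair : ∀ x y : G, x ≠ y → ∃! B, B ∈ 𝓑 ∧ x ∈ B ∧ y ∈ B)
    (hreg : ∀ B ∈ 𝓑, ∀ g : G, B.image (· + g) ∈ 𝓑)
    (hzs : ∀ B ∈ 𝓑, ∑ x ∈ B, x = 0) :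
    (∀ g : G, k • g = 0) ∧
    v ≡ k [MOD k * (k - 1)] ∧
    (∀ p : ℕ, p.Prime → (p ∣ v ↔ p ∣ k)) ∧
    k % 4 ≠ 2 := by
  subst hv
  classical
  have hv2 : 2 ≤ Fintype.card G := le_trans hk2 hkv
  -- there is at least one block
  obtain ⟨g₁, hg₁⟩ : ∃ g : G, g ≠ 0 := by
    obtain ⟨b, hb⟩ := Fintype.exists_ne_of_one_lt_card (by omega) (0 : G)
    exact ⟨b, hb⟩
  obtain ⟨B₁, ⟨hB₁, h0B₁, -⟩, -⟩ := hpair 0 g₁ (Ne.symm hg₁)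
  -- (i)
  have hnsmul : ∀ g : G, k • g = 0 := by
    intro g
    have h := hzs _ (hreg B₁ hB₁ g)
    rw [show B₁.image (· + g) = trG g B₁ from rfl] at h
    rw [sum_trG, hzs B₁ hB₁, hcard B₁ hB₁, zero_add] at h
    exact h
  -- two blocks through 0 sharing a nonzero point coincide
  have hdisj0 : ∀ B ∈ 𝓑, ∀ B' ∈ 𝓑, (0:G) ∈ B → (0:G) ∈ B' →
      ∀ x : G, x ≠ 0 → x ∈ B → x ∈ B' → B = B' := by
    intro B hB B' hB' h0 h0' x hx hxB hxB'
    obtain ⟨C, -, hC⟩ := hpair 0 x (Ne.symm hx)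
    rw [hC B ⟨hB, h0, hxB⟩, hC B' ⟨hB', h0', hxB'⟩]
  set 𝓑₀ := 𝓑.filter (fun B => (0:G) ∈ B) with h𝓑₀
  -- counting: blocks through 0 partition the nonzero points
  have hcount : Fintype.card G - 1 = 𝓑₀.card * (k - 1) := by
    have hcover : Finset.univ.erase (0:G) = 𝓑₀.biUnion (fun B => B.erase 0) := by
      ext x
      simp only [Finset.mem_erase, Finset.mem_univ, and_true, Finset.mem_biUnion,
        h𝓑₀, Finset.mem_filter]
      constructor
      · intro hx
        obtain ⟨B, ⟨hB, h0, hxB⟩, -⟩ := hpair 0 x (Ne.symm hx)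
        exact ⟨B, ⟨hB, h0⟩, hx, hxB⟩
      · rintro ⟨B, -, hx⟩
        exact hx.1
    have hdisj : ∀ B ∈ 𝓑₀, ∀ B' ∈ 𝓑₀, B ≠ B' → Disjoint (B.erase 0) (B'.erase 0) := by
      intro B hB B' hB' hne
      rw [Finset.disjoint_left]
      intro x hxB hxB'
      obtain ⟨hBm, h0B⟩ := Finset.mem_filter.mp hB
      obtain ⟨hBm', h0B'⟩ := Finset.mem_filter.mp hB'
      obtain ⟨hx0, hxB2⟩ := Finset.mem_erase.mp hxB
      obtain ⟨-, hxB2'⟩ := Finset.mem_erase.mp hxB'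
      exact hne (hdisj0 B hBm B' hBm' h0B h0B' x hx0 hxB2 hxB2')
    have h1 : (Finset.univ.erase (0:G)).card = Fintype.card G - 1 := by
      rw [Finset.card_erase_of_mem (Finset.mem_univ _), Finset.card_univ]
    rw [← h1, hcover, Finset.card_biUnion hdisj]
    rw [Finset.sum_congr rfl (fun B hB => ?_), Finset.sum_const, smul_eq_mul]
    obtain ⟨hBm, h0B⟩ := Finset.mem_filter.mp hB
    rw [Finset.card_erase_of_mem h0B, hcard B hBm]
  -- a block through 0 with nontrivial stabilizer equals all its translates through 0
  have hp' : ∀ B ∈ 𝓑, (0:G) ∈ B → ∀ g : G, g ≠ 0 → trG g B = B →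
      ∀ x ∈ B, trG (-x) B = B := by
    intro B hB h0 g hg hstab x hx
    have hBg : g ∈ B := by
      have h := mem_trG_of_mem (g := g) h0
      rwa [hstab, zero_add] at h
    have hB' : trG (-x) B ∈ 𝓑 := hreg B hB (-x)
    have h0' : (0:G) ∈ trG (-x) B := by
      have h := mem_trG_of_mem (g := -x) hx
      rwa [add_neg_cancel] at h
    have hstab' : trG g (trG (-x) B) = trG (-x) B := by
      rw [trG_trG, add_comm, ← trG_trG, hstab]
    have hg' : g ∈ trG (-x) B := by
      have h := mem_trG_of_mem (g := g) h0'
      rwa [hstab', zero_add] at h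
    exact hdisj0 _ hB' _ hB h0' h0 g hg hg' hBg
  -- key: there is a block through 0 invariant under all its translations
  have key : ∃ H ∈ 𝓑, (0:G) ∈ H ∧ ∀ x ∈ H, trG (-x) H = H := by
    by_contra hcon
    push_neg at hcon
    have Htriv : ∀ B ∈ 𝓑, (0:G) ∈ B → ∀ g : G, trG g B = B → g = 0 := by
      intro B hB h0 g hstab
      by_contra hg
      obtain ⟨x, hx, hne⟩ := hcon B hB h0
      exact hne (hp' B hB h0 g hg hstab x hx)
    have hfiber : ∀ B ∈ 𝓑₀, (𝓑₀.filter (fun B' => orbG B' = orbG B)).card = k := by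
      intro B hB0
      obtain ⟨hB, h0⟩ := Finset.mem_filter.mp hB0
      have heq : 𝓑₀.filter (fun B' => orbG B' = orbG B) = orbG B := by
        ext B'
        simp only [Finset.mem_filter, h𝓑₀]
        constructor
        · rintro ⟨⟨hB', h0'⟩, horb⟩
          have hself : B' ∈ orbG B' := by
            refine Finset.mem_image.mpr ⟨0, h0', ?_⟩
            rw [neg_zero, trG_zero]
          rwa [horb] at hself
        · intro hB'
          obtain ⟨x, hx, rfl⟩ := Finset.mem_image.mp hB'
          refine ⟨⟨hreg B hB (-x), ?_⟩, orbG_trG _ _⟩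
          have h := mem_trG_of_mem (g := -x) hx
          rwa [add_neg_cancel] at h
      rw [heq, show orbG B = B.image (fun x => trG (-x) B) from rfl]
      rw [Finset.card_image_of_injOn, hcard B hB]
      intro x hx y hy hxy
      have h1 : trG (-y + x) B = B := by
        have h := congrArg (trG x) hxy
        rw [trG_trG, trG_trG, neg_add_cancel, trG_zero] at h
        exact h.symm
      have h2 := Htriv B hB h0 _ h1
      have : -y + x = 0 → x = y := by
        intro h
        have := congrArg (fun t => y + t) h
        simpa [← add_assoc] using this
      exact this h2
    have hdvd : k ∣ 𝓑₀.card := by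
      rw [Finset.card_eq_sum_card_fiberwise
        (f := orbG) (t := 𝓑₀.image orbG) (fun B hB => Finset.mem_image_of_mem orbG hB)]
      apply Finset.dvd_sum
      intro t ht
      obtain ⟨B, hB, rfl⟩ := Finset.mem_image.mp ht
      rw [hfiber B hB]
    obtain ⟨N, hN⟩ := hdvd
    have hne1 : Fintype.card G ≠ 1 := by omega
    have hp := Nat.minFac_prime hne1
    haveI := Fact.mk hp
    obtain ⟨x, hx⟩ := exists_prime_addOrderOf_dvd_card (Fintype.card G).minFac
      (Nat.minFac_dvd _)
    have hpk : (Fintype.card G).minFac ∣ k :=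
      hx ▸ addOrderOf_dvd_of_nsmul_eq_zero (hnsmul x)
    have hpv1 : (Fintype.card G).minFac ∣ Fintype.card G - 1 := by
      rw [hcount, hN]
      exact Dvd.dvd.mul_right (Dvd.dvd.mul_right hpk N) (k - 1)
    have hone : (Fintype.card G).minFac ∣ 1 := by
      have h := Nat.dvd_sub (Nat.minFac_dvd _) hpv1
      rwa [Nat.sub_sub_self (by omega)] at h
    exact hp.ne_one (Nat.dvd_one.mp hone)
  obtain ⟨H, hH, h0H, hstabH⟩ := key
  -- H is (the carrier of) a subgroup of order k
  have hnegH : ∀ x ∈ H, -x ∈ H := by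
    intro x hx
    have h := mem_trG_of_mem (g := -x) h0H
    rwa [zero_add, hstabH x hx] at h
  have haddH : ∀ x ∈ H, ∀ y ∈ H, x + y ∈ H := by
    intro x hx y hy
    have h1 : trG (-(-y)) H = H := hstabH (-y) (hnegH y hy)
    rw [neg_neg] at h1
    have h := mem_trG_of_mem (g := y) hx
    rwa [h1] at h
  let S : AddSubgroup G :=
    { carrier := ↑H
      zero_mem' := h0H
      add_mem' := fun {a b} ha hb => haddH a ha b hb
      neg_mem' := fun {a} ha => hnegH a ha }
  have hScard : Nat.card S = k := by
    rw [← SetLike.coe_sort_coe, Nat.card_coe_set_eq,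
      show (S : Set G) = ↑H from rfl, Set.ncard_coe_finset, hcard H hH]
  have hkdvd : k ∣ Fintype.card G := by
    have h := AddSubgroup.card_addSubgroup_dvd_card S
    rwa [hScard, Nat.card_eq_fintype_card] at h
  -- (ii)
  have hk1 : (k - 1) ∣ Fintype.card G - 1 := ⟨𝓑₀.card, by rw [hcount, mul_comm]⟩
  have hmodeq : Fintype.card G ≡ k [MOD k * (k - 1)] := by
    have h1 : k ∣ Fintype.card G - k := Nat.dvd_sub hkdvd dvd_rfl
    have h2 : (k - 1) ∣ Fintype.card G - k := by
      rw [show Fintype.card G - k = (Fintype.card G - 1) - (k - 1) by omega]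
      exact Nat.dvd_sub hk1 dvd_rfl
    have hco : Nat.Coprime k (k - 1) := by
      have h := Nat.dvd_sub (Nat.gcd_dvd_left k (k - 1)) (Nat.gcd_dvd_right k (k - 1))
      rw [show k - (k - 1) = 1 by omega] at h
      exact Nat.coprime_iff_gcd_eq_one.mpr (Nat.dvd_one.mp h)
    exact ((Nat.modEq_iff_dvd' hkv).mpr (hco.mul_dvd_of_dvd_of_dvd h1 h2)).symm
  -- (iii)
  have hrad : ∀ p : ℕ, p.Prime → (p ∣ Fintype.card G ↔ p ∣ k) := by
    intro p hp
    constructor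
    · intro hpv
      haveI := Fact.mk hp
      obtain ⟨x, hx⟩ := exists_prime_addOrderOf_dvd_card p hpv
      exact hx ▸ addOrderOf_dvd_of_nsmul_eq_zero (hnsmul x)
    · intro hpk
      exact hpk.trans hkdvd
  -- (iv)
  have h4 : k % 4 ≠ 2 := by
    intro hmod
    have hsumH := hzs H hH
    rw [← Finset.sum_filter_add_sum_filter_not H (fun x => x + x = 0)] at hsumH
    have hmemneg : ∀ a ∈ H.filter (fun x => ¬(x + x = 0)),
        -a ∈ H.filter (fun x => ¬(x + x = 0)) := by
      intro a ha
      obtain ⟨haH, hna⟩ := Finset.mem_filter.mp ha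
      refine Finset.mem_filter.mpr ⟨hnegH a haH, fun hc => hna ?_⟩
      have h := congrArg Neg.neg hc
      rw [neg_add_rev, neg_neg, neg_zero] at h
      exact h
    have hnefix : ∀ a ∈ H.filter (fun x => ¬(x + x = 0)), -a ≠ a := by
      intro a ha h
      obtain ⟨-, hna⟩ := Finset.mem_filter.mp ha
      apply hna
      nth_rewrite 1 [← h]
      exact neg_add_cancel a
    have h2 : ∑ x ∈ H.filter (fun x => ¬(x + x = 0)), x = 0 := by
      apply Finset.sum_involution (g := fun a _ => -a)
      · intro a _
        exact add_neg_cancel a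
      · intro a ha _
        exact hnefix a ha
      · intro a ha
        exact neg_neg a
      · intro a ha
        exact hmemneg a ha
    rw [h2, add_zero] at hsumH
    -- parity of the non-2-torsion part
    have hpar : 2 ∣ (H.filter (fun x => ¬(x + x = 0))).card := by
      have hz : ∑ _x ∈ H.filter (fun x => ¬(x + x = 0)), (1 : ZMod 2) = 0 := by
        apply Finset.sum_involution (g := fun a _ => -a)
        · intro a _
          decide
        · intro a ha _
          exact hnefix a ha
        · intro a ha
          exact neg_neg a
        · intro a ha
          exact hmemneg a ha
      rw [Finset.sum_const, nsmul_eq_mul, mul_one] at hz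
      exact (ZMod.natCast_eq_zero_iff _ 2).mp hz
    have hsplit := Finset.card_filter_add_card_filter_not
      (s := H) (p := fun x => x + x = 0)
    rw [hcard H hH] at hsplit
    have hkeven : 2 ∣ k := by omega
    have hTcard : 2 ∣ (H.filter (fun x => x + x = 0)).card := by omega
    have h0T : (0:G) ∈ H.filter (fun x => x + x = 0) :=
      Finset.mem_filter.mpr ⟨h0H, by rw [add_zero]⟩
    have hT1 : 1 < (H.filter (fun x => x + x = 0)).card := by
      have := Finset.card_pos.mpr ⟨0, h0T⟩
      omega
    obtain ⟨ι, hιT, hι0⟩ := Finset.exists_mem_ne hT1 0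
    by_cases huniq : ∀ b ∈ H.filter (fun x => x + x = 0), b = 0 ∨ b = ι
    · have hTeq : H.filter (fun x => x + x = 0) = {0, ι} := by
        apply Finset.Subset.antisymm
        · intro b hb
          rcases huniq b hb with rfl | rfl
          · exact Finset.mem_insert_self _ _
          · exact Finset.mem_insert_of_mem (Finset.mem_singleton_self _)
        · intro b hb
          rcases Finset.mem_insert.mp hb with rfl | hb
          · exact h0T
          · rw [Finset.mem_singleton.mp hb]
            exact hιT
      rw [hTeq, Finset.sum_insert (by simpa using Ne.symm hι0),
        Finset.sum_singleton, zero_add] at hsumH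
      exact hι0 hsumH
    · push_neg at huniq
      obtain ⟨b, hbT, hb0, hbι⟩ := huniq
      obtain ⟨hιH, hι2⟩ := Finset.mem_filter.mp hιT
      obtain ⟨hbH, hb2⟩ := Finset.mem_filter.mp hbT
      have h4k : (4:ℕ) ∣ k := by
        rw [← hScard]
        exact klein_card_dvd S ι b hιH hbH hι2 hb2 hι0 hb0 (Ne.symm hbι)
      omega
  exact ⟨hnsmul, hmodeq, hrad, h4⟩
end

section
/- Let k ≥ 3, let G be a zero-sum finite abelian group of order k, let p be a prime dividing k, and let q be a power of p with q ≡ 1 (mod k−1). If there exists an additive (G × F_q, G × {0}, k, 1) difference family, then for every integer n ≥ 1 there exists a (G × F_{q^n})-super-regular 2-(k·q^n, k, 1) design. -/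
open Polynomial

lemma my_charP {K : Type} [Field K] [Fintype K] (p s : ℕ) (hp : p.Prime) (hs : s ≠ 0)
    (h : Fintype.card K = p ^ s) : CharP K p := by
  obtain ⟨r, hr⟩ := CharP.exists K
  haveI := hr
  obtain ⟨t, hrp, hcard⟩ := FiniteField.card K r
  have hrdvd : r ∣ p ^ s := by rw [← h, hcard]; exact dvd_pow_self r t.ne_zero
  have : r = p := by
    rcases hrp.dvd_of_dvd_pow hrdvd with h'
    exact (Nat.prime_dvd_prime_iff_eq hrp hp).mp h'
  rwa [this] at hr

lemma my_embed {F K : Type} [Field F] [Fintype F] [Field K] [Fintype K]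
    {p m n : ℕ} (hp : p.Prime) (hm : m ≠ 0) (hn : n ≠ 0)
    (hF : Fintype.card F = p ^ m) (hK : Fintype.card K = p ^ (m * n)) :
    Nonempty (F →+* K) := by
  classical
  haveI : Fact p.Prime := ⟨hp⟩
  haveI : CharP K p := my_charP p (m * n) hp (by positivity) hK
  haveI : ExpChar K p := ExpChar.prime hp
  set q := p ^ m with hqdef
  have hq1 : 1 < q := Nat.one_lt_pow hm hp.one_lt
  have hqn1 : 1 < q ^ n := Nat.one_lt_pow hn hq1
  have hKq : Fintype.card K = q ^ n := by rw [hK, hqdef, ← pow_mul]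
  set Fr : K →+* K := iterateFrobenius K p m with hFr
  have hFrdef : ∀ x : K, Fr x = x ^ q := fun x => iterateFrobenius_def p m x
  set S : Subfield K :=
    { carrier := {x : K | Fr x = x}
      mul_mem' := fun ha hb => by
        simp only [Set.mem_setOf_eq, map_mul] at *; rw [ha, hb]
      one_mem' := map_one _
      add_mem' := fun ha hb => by
        simp only [Set.mem_setOf_eq, map_add] at *; rw [ha, hb]
      zero_mem' := map_zero _
      neg_mem' := fun ha => by
        simp only [Set.mem_setOf_eq, map_neg] at *; rw [ha]
      inv_mem' := fun x hx => by
        simp only [Set.mem_setOf_eq, map_inv₀] at *; rw [hx] } with hS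
  have hmem : ∀ x : K, x ∈ S ↔ x ^ q = x := by
    intro x
    change Fr x = x ↔ _
    rw [hFrdef]
  -- polynomial facts
  set f : K[X] := X ^ q - X with hf
  have hfdvd : f ∣ X ^ (q ^ n) - X := by
    have hdvdnat : q - 1 ∣ q ^ n - 1 := by
      simpa using Nat.sub_dvd_pow_sub_pow q 1 n
    have h1 : (X : K[X]) ^ (q - 1) - 1 ∣ X ^ (q ^ n - 1) - 1 := by
      have := sub_dvd_pow_sub_pow ((X : K[X]) ^ (q - 1)) 1 ((q ^ n - 1) / (q - 1))
      rwa [one_pow, ← pow_mul, Nat.mul_div_cancel' hdvdnat] at this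
    have e1 : f = X * ((X : K[X]) ^ (q - 1) - 1) := by
      rw [hf, mul_sub, mul_one, ← pow_succ', Nat.sub_add_cancel (by omega)]
    have e2 : (X : K[X]) ^ (q ^ n) - X = X * ((X : K[X]) ^ (q ^ n - 1) - 1) := by
      rw [mul_sub, mul_one, ← pow_succ', Nat.sub_add_cancel (by omega)]
    rw [e1, e2]
    exact mul_dvd_mul_left _ h1
  have hsep_g : ((X : K[X]) ^ (q ^ n) - X).Separable := by
    apply galois_poly_separable p (q ^ n)
    rw [hqdef, ← pow_mul]
    exact dvd_pow_self p (by positivity)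
  have hg_ne : ((X : K[X]) ^ (q ^ n) - X) ≠ 0 := by
    have := FiniteField.X_pow_card_pow_sub_X_ne_zero K (n := n) (p := q) hn hq1
    simpa using this
  have hsplits_g : Splits ((X : K[X]) ^ (q ^ n) - X) := by
    rw [splits_iff_card_roots]
    have hroots := FiniteField.roots_X_pow_card_sub_X K
    rw [hKq] at hroots
    rw [hroots]
    rw [FiniteField.X_pow_card_pow_sub_X_natDegree_eq K hn hq1]
    simpa using hKq
  have hsep_f : f.Separable := hsep_g.of_dvd hfdvd
  have hsplits_f : Splits f := hsplits_g.of_dvd hg_ne hfdvd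
  have hf_ne : f ≠ 0 := FiniteField.X_pow_card_sub_X_ne_zero K hq1
  have hroots_card : Multiset.card f.roots = q := by
    rw [splits_iff_card_roots.mp hsplits_f, hf,
      FiniteField.X_pow_card_sub_X_natDegree_eq K hq1]
  have hnodup : f.roots.Nodup := Polynomial.nodup_roots hsep_f
  haveI : Fintype S := Fintype.ofFinite S
  have hcardS : Fintype.card S = q := by
    have e1 : Fintype.card S = Fintype.card {x : K // x ^ q = x} :=
      Fintype.card_congr (Equiv.subtypeEquivRight fun x => hmem x)
    have e2 : (Finset.univ.filter fun x : K => x ^ q = x) = f.roots.toFinset := by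
      ext z
      simp only [Finset.mem_filter, Finset.mem_univ, true_and, Multiset.mem_toFinset,
        mem_roots, hf_ne, Ne, not_false_iff, IsRoot.def, hf]
      rw [← hf, mem_roots hf_ne, IsRoot.def, hf, eval_sub, eval_pow, eval_X, sub_eq_zero]
    rw [e1, Fintype.card_subtype, e2, Multiset.toFinset_card_of_nodup hnodup, hroots_card]
  have hFS : Fintype.card F = Fintype.card S := by rw [hF, hcardS]
  exact ⟨S.subtype.comp (FiniteField.ringEquivOfCardEq hFS).toRingHom⟩

/-- If `G` is a zero-sum abelian group of order `k ≥ 3`, `q ≡ 1 (mod k-1)` is a power of a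
prime divisor `p` of `k`, and there exists an additive `(G × F_q, G × {0}, k, 1)`
difference family, then for every `n ≥ 1` there exists a `(G × F_{q^n})`-super-regular
2-(k·qⁿ, k, 1) design. -/
theorem stmt_8 (k : ℕ) (hk : 3 ≤ k)
    (G : Type) [AddCommGroup G] [Fintype G] [DecidableEq G]
    (hGcard : Fintype.card G = k) (hGzs : ∑ g : G, g = 0)
    (p : ℕ) (hp : p.Prime) (hpk : p ∣ k)
    (q : ℕ) (hq : ∃ m : ℕ, 1 ≤ m ∧ q = p ^ m) (hq1 : q ≡ 1 [MOD k - 1])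
    (F : Type) [Field F] [Fintype F] [DecidableEq F] (hF : Fintype.card F = q)
    (𝓕 : Finset (Finset (G × F)))
    (hFcard : ∀ B ∈ 𝓕, B.card = k)
    (hFzs : ∀ B ∈ 𝓕, ∑ x ∈ B, x = 0)
    (hDF : ∀ γ : G × F,
      (γ.2 ≠ 0 →
        (∑ B ∈ 𝓕, ((B ×ˢ B).filter (fun pr => pr.1 - pr.2 = γ)).card) = 1) ∧
      (γ.2 = 0 →
        (∑ B ∈ 𝓕, ((B ×ˢ B).filter (fun pr => pr.1 ≠ pr.2 ∧ pr.1 - pr.2 = γ)).card) = 0))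
    (n : ℕ) (hn : 1 ≤ n)
    (K : Type) [Field K] [Fintype K] [DecidableEq K] (hK : Fintype.card K = q ^ n) :
    ∃ 𝓑 : Finset (Finset (G × K)),
      (∀ B ∈ 𝓑, B.card = k) ∧
      (∀ x y : G × K, x ≠ y → ∃! B, B ∈ 𝓑 ∧ x ∈ B ∧ y ∈ B) ∧
      (∀ B ∈ 𝓑, ∀ g : G × K, B.image (· + g) ∈ 𝓑) ∧
      (∀ B ∈ 𝓑, ∑ x ∈ B, x = 0) := by
  classical
  obtain ⟨m, hm1, hqm⟩ := hq
  haveI : Fact p.Prime := ⟨hp⟩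
  have hK' : Fintype.card K = p ^ (m * n) := by rw [hK, hqm, ← pow_mul]
  have hF' : Fintype.card F = p ^ m := by rw [hF, hqm]
  haveI : CharP K p := my_charP p (m * n) hp (by positivity) hK'
  have hkK : (k : K) = 0 := (CharP.cast_eq_zero_iff K p k).mpr hpk
  obtain ⟨ψ⟩ := my_embed (F := F) (K := K) hp (by omega) (by omega) hF' hK'
  have hψinj : Function.Injective ψ := ψ.injective
  set W : Subgroup Kˣ := (Units.map (ψ.toMonoidHom)).range with hW
  letI : Fintype (Kˣ ⧸ W) := Fintype.ofFinite _
  -- basic maps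
  set φ : Kˣ → (G × F) → (G × K) := fun t gf => (gf.1, (t : K) * ψ gf.2) with hφ
  set blk : Finset (G × F) → Kˣ → (G × K) → Finset (G × K) :=
    fun B t z => B.image (fun gf => φ t gf + z) with hblk
  set cst : K → Finset (G × K) := fun c => (Finset.univ : Finset G).image (fun g => (g, c))
    with hcst
  set 𝓑 : Finset (Finset (G × K)) :=
    ((𝓕 ×ˢ ((Finset.univ : Finset (Kˣ ⧸ W)) ×ˢ (Finset.univ : Finset (G × K)))).image
      fun Btz => blk Btz.1 Btz.2.1.out Btz.2.2) ∪ (Finset.univ : Finset K).image cst with h𝓑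
  have hmem𝓑 : ∀ C : Finset (G × K),
      C ∈ 𝓑 ↔ ((∃ B ∈ 𝓕, ∃ τ : Kˣ ⧸ W, ∃ z, C = blk B τ.out z) ∨ ∃ c, C = cst c) := by
    intro C
    rw [h𝓑, Finset.mem_union]
    constructor
    · rintro (h | h)
      · obtain ⟨⟨B, τ, z⟩, hmem, rfl⟩ := Finset.mem_image.mp h
        obtain ⟨hB, -⟩ := Finset.mem_product.mp hmem
        exact Or.inl ⟨B, hB, τ, z, rfl⟩
      · obtain ⟨c, -, rfl⟩ := Finset.mem_image.mp h
        exact Or.inr ⟨c, rfl⟩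
    · rintro (⟨B, hB, τ, z, rfl⟩ | ⟨c, rfl⟩)
      · exact Or.inl (Finset.mem_image.mpr ⟨⟨B, τ, z⟩,
          Finset.mem_product.mpr ⟨hB, Finset.mem_product.mpr ⟨Finset.mem_univ _,
            Finset.mem_univ _⟩⟩, rfl⟩)
      · exact Or.inr (Finset.mem_image.mpr ⟨c, Finset.mem_univ _, rfl⟩)
  have hbinj : ∀ (t : Kˣ) (z : G × K), Function.Injective (fun gf : G × F => φ t gf + z) := by
    intro t z a b hab
    have h := add_right_cancel hab
    simp only [hφ, Prod.mk.injEq] at h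
    obtain ⟨h1, h2⟩ := h
    exact Prod.ext h1 (hψinj (mul_left_cancel₀ (Units.ne_zero t) h2))
  have hcinj : ∀ c : K, Function.Injective (fun g : G => (g, c)) := by
    intro c a b hab; exact congrArg Prod.fst hab
  -- difference of two images
  have hφsub : ∀ (t : Kˣ) (a b : G × F) (z : G × K),
      (φ t a + z) - (φ t b + z) = (a.1 - b.1, (t : K) * ψ (a.2 - b.2)) := by
    intro t a b z
    have : (φ t a + z) - (φ t b + z) = φ t a - φ t b := by abel
    rw [this, hφ]
    refine Prod.ext ?_ ?_
    · simp
    · simp [map_sub, mul_sub]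
  -- extraction from hDF, nonzero case
  have hA : ∀ γ : G × F, γ.2 ≠ 0 → ∃ B b1 b2,
      (B ∈ 𝓕 ∧ b1 ∈ B ∧ b2 ∈ B ∧ b1 - b2 = γ) ∧
      ∀ B' b1' b2', B' ∈ 𝓕 → b1' ∈ B' → b2' ∈ B' → b1' - b2' = γ →
        B' = B ∧ b1' = b1 ∧ b2' = b2 := by
    intro γ hγ
    have h1 := (hDF γ).1 hγ
    set P := 𝓕.sigma (fun B => (B ×ˢ B).filter fun pr => pr.1 - pr.2 = γ) with hP
    have hcard : P.card = 1 := by rw [hP, Finset.card_sigma]; exact h1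
    obtain ⟨a, ha⟩ := Finset.card_eq_one.mp hcard
    have hamem : a ∈ P := ha ▸ Finset.mem_singleton_self a
    rw [hP, Finset.mem_sigma, Finset.mem_filter, Finset.mem_product] at hamem
    refine ⟨a.1, a.2.1, a.2.2, ⟨hamem.1, hamem.2.1.1, hamem.2.1.2, hamem.2.2⟩, ?_⟩
    intro B' b1' b2' h1' h2' h3' h4'
    have hmem' : (⟨B', (b1', b2')⟩ : Σ _ : Finset (G × F), (G × F) × (G × F)) ∈ P := by
      rw [hP, Finset.mem_sigma, Finset.mem_filter, Finset.mem_product]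
      exact ⟨h1', ⟨h2', h3'⟩, h4'⟩
    rw [ha, Finset.mem_singleton] at hmem'
    obtain ⟨hBeq, hpair⟩ := Sigma.mk.inj_iff.mp hmem'
    have hpair' : (b1', b2') = a.2 := eq_of_heq hpair
    exact ⟨hBeq, congrArg Prod.fst hpair', congrArg Prod.snd hpair'⟩
  -- extraction from hDF, zero case
  have hZ : ∀ γ : G × F, γ.2 = 0 → ∀ B ∈ 𝓕, ∀ b1 ∈ B, ∀ b2 ∈ B, b1 ≠ b2 → b1 - b2 ≠ γ := by
    intro γ hγ B hB b1 hb1 b2 hb2 hne heq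
    have h0 := (hDF γ).2 hγ
    have hz : ((B ×ˢ B).filter fun pr => pr.1 ≠ pr.2 ∧ pr.1 - pr.2 = γ).card = 0 :=
      Finset.sum_eq_zero_iff.mp h0 B hB
    rw [Finset.card_eq_zero] at hz
    have : (b1, b2) ∈ (B ×ˢ B).filter fun pr => pr.1 ≠ pr.2 ∧ pr.1 - pr.2 = γ :=
      Finset.mem_filter.mpr ⟨Finset.mem_product.mpr ⟨hb1, hb2⟩, hne, heq⟩
    rw [hz] at this
    exact absurd this (Finset.notMem_empty _)
  -- decomposition of units
  have hdec : ∀ u : Kˣ, ∃ f : Fˣ,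
      (u : K) = (((QuotientGroup.mk u : Kˣ ⧸ W)).out : K) * ψ f := by
    intro u
    have h1 : (QuotientGroup.mk ((QuotientGroup.mk u : Kˣ ⧸ W).out) : Kˣ ⧸ W)
        = QuotientGroup.mk u := QuotientGroup.out_eq' _
    have h2 : ((QuotientGroup.mk u : Kˣ ⧸ W).out)⁻¹ * u ∈ W := QuotientGroup.eq.mp h1
    obtain ⟨fu, hfu⟩ := h2
    refine ⟨fu, ?_⟩
    have := congrArg (fun w : Kˣ => ((QuotientGroup.mk u : Kˣ ⧸ W).out * w : K)) hfu
    simpa [mul_assoc] using this.symm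
  have huniq : ∀ (τ : Kˣ ⧸ W) (f : Fˣ) (u : Kˣ), (u : K) = (τ.out : K) * ψ f →
      τ = QuotientGroup.mk u := by
    intro τ f u h
    have hu : u = τ.out * (Units.map ψ.toMonoidHom f) := by
      apply Units.ext
      simpa using h
    rw [hu, QuotientGroup.mk_mul_of_mem τ.out
      (show _ ∈ W from MonoidHom.mem_range.mpr ⟨f, rfl⟩), QuotientGroup.out_eq']
  refine ⟨𝓑, ?_, ?_, ?_, ?_⟩
  · -- block sizes
    intro C hC
    rcases (hmem𝓑 C).mp hC with ⟨B, hB, τ, z, rfl⟩ | ⟨c, rfl⟩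
    · simp only [hblk]
      rw [Finset.card_image_of_injective _ (hbinj _ _), hFcard B hB]
    · simp only [hcst]
      rw [Finset.card_image_of_injective _ (hcinj c), Finset.card_univ, hGcard]
  · -- 2-design property
    intro x y hxy
    set d : G × K := x - y with hd
    by_cases hd2 : d.2 = 0
    · -- pair inside a coset of G × {0}
      have hy2 : y.2 = x.2 := by
        have h : x.2 - y.2 = 0 := by rw [← Prod.snd_sub, ← hd]; exact hd2
        exact (sub_eq_zero.mp h).symm
      refine ⟨cst x.2, ⟨(hmem𝓑 _).mpr (Or.inr ⟨x.2, rfl⟩), ?_, ?_⟩, ?_⟩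
      · simp only [hcst, Finset.mem_image]
        exact ⟨x.1, Finset.mem_univ _, Prod.mk.eta⟩
      · simp only [hcst, Finset.mem_image]
        exact ⟨y.1, Finset.mem_univ _, Prod.ext rfl hy2.symm⟩
      · rintro C' ⟨hC', hxC', hyC'⟩
        rcases (hmem𝓑 C').mp hC' with ⟨B', hB', τ', z', rfl⟩ | ⟨c, rfl⟩
        · exfalso
          simp only [hblk, Finset.mem_image] at hxC' hyC'
          obtain ⟨b1, hb1, hxe⟩ := hxC'
          obtain ⟨b2, hb2, hye⟩ := hyC'
          have hne : b1 ≠ b2 := by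
            rintro rfl
            exact hxy (hxe ▸ hye ▸ rfl)
          have hdiff : d = (b1.1 - b2.1, (τ'.out : K) * ψ (b1.2 - b2.2)) := by
            rw [hd, ← hxe, ← hye, hφsub]
          have hψ0 : ψ (b1.2 - b2.2) = 0 := by
            have h2 : d.2 = (τ'.out : K) * ψ (b1.2 - b2.2) := by rw [hdiff]
            rw [hd2] at h2
            rcases mul_eq_zero.mp h2.symm with h | h
            · exact absurd h (Units.ne_zero _)
            · exact h
          have hb12 : b1.2 - b2.2 = 0 := hψinj (by rw [hψ0, map_zero])
          exact hZ (b1 - b2) (by rw [Prod.snd_sub]; exact hb12) B' hB' b1 hb1 b2 hb2 hne rfl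
        · simp only [hcst, Finset.mem_image] at hxC'
          obtain ⟨g0, -, hg0⟩ := hxC'
          have hcx : c = x.2 := by rw [← hg0]
          rw [hcx]
    · -- pair with distinct K-coordinates
      set u : Kˣ := Units.mk0 d.2 hd2 with hu
      set τ0 : Kˣ ⧸ W := QuotientGroup.mk u with hτ0
      obtain ⟨f0, hf0⟩ := hdec u
      set t0 : Kˣ := τ0.out with ht0
      have hd2eq : d.2 = (t0 : K) * ψ (f0 : F) := by
        rw [ht0, hτ0]
        rw [hu] at hf0 ⊢
        simpa using hf0
      have hf0ne : (f0 : F) ≠ 0 := Units.ne_zero f0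
      obtain ⟨B, b1, b2, ⟨hB, hb1, hb2, hbe⟩, huniqB⟩ := hA (d.1, (f0 : F)) hf0ne
      have h12 : b1.1 - b2.1 = d.1 := by
        have := congrArg Prod.fst hbe
        rwa [Prod.fst_sub] at this
      have h22 : b1.2 - b2.2 = (f0 : F) := by
        have := congrArg Prod.snd hbe
        rwa [Prod.snd_sub] at this
      set z : G × K := x - φ t0 b1 with hz
      have hφd : φ t0 b1 - φ t0 b2 = d := by
        have h := hφsub t0 b1 b2 0
        simp only [add_zero] at h
        rw [h, h12, h22, ← hd2eq]
      refine ⟨blk B t0 z, ⟨(hmem𝓑 _).mpr (Or.inl ⟨B, hB, τ0, z, by rw [ht0]⟩), ?_, ?_⟩, ?_⟩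
      · simp only [hblk, Finset.mem_image]
        refine ⟨b1, hb1, ?_⟩
        rw [hz, add_comm, sub_add_cancel]
      · simp only [hblk, Finset.mem_image]
        refine ⟨b2, hb2, ?_⟩
        have h : φ t0 b2 + z = x - (φ t0 b1 - φ t0 b2) := by rw [hz]; abel
        rw [h, hφd, hd, sub_sub_cancel]
      · rintro C' ⟨hC', hxC', hyC'⟩
        rcases (hmem𝓑 C').mp hC' with ⟨B', hB', τ', z', rfl⟩ | ⟨c, rfl⟩
        swap
        · exfalso
          simp only [hcst, Finset.mem_image] at hxC' hyC'
          obtain ⟨g1, -, hg1⟩ := hxC'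
          obtain ⟨g2, -, hg2⟩ := hyC'
          apply hd2
          have hx2 : x.2 = c := by rw [← hg1]
          have hy2 : y.2 = c := by rw [← hg2]
          rw [hd, Prod.snd_sub, hx2, hy2, sub_self]
        · simp only [hblk, Finset.mem_image] at hxC' hyC'
          obtain ⟨b1', hb1', hxe⟩ := hxC'
          obtain ⟨b2', hb2', hye⟩ := hyC'
          have hdiff : d = (b1'.1 - b2'.1, (τ'.out : K) * ψ (b1'.2 - b2'.2)) := by
            rw [hd, ← hxe, ← hye, hφsub]
          have hd2' : d.2 = (τ'.out : K) * ψ (b1'.2 - b2'.2) := by rw [hdiff]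
          have hfne : b1'.2 - b2'.2 ≠ 0 := by
            intro h0
            apply hd2
            rw [hd2', h0, map_zero, mul_zero]
          have hτeq : τ' = τ0 := by
            have h := huniq τ' (Units.mk0 _ hfne) u (by rw [hu]; simpa using hd2')
            rw [h, hτ0]
          have hteq : τ'.out = t0 := by rw [hτeq, ht0]
          have hfeq : b1'.2 - b2'.2 = (f0 : F) := by
            apply hψinj
            apply mul_left_cancel₀ (Units.ne_zero t0)
            rw [hteq] at hd2'
            rw [← hd2', ← hd2eq]
          have hγ' : b1' - b2' = (d.1, (f0 : F)) := by
            refine Prod.ext ?_ ?_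
            · rw [Prod.fst_sub]
              have := congrArg Prod.fst hdiff
              rw [this]
            · rw [Prod.snd_sub]
              exact hfeq
          obtain ⟨hBeq, hb1eq, hb2eq⟩ := huniqB B' b1' b2' hB' hb1' hb2' hγ'
          have hzeq : z' = z := by
            rw [hz, ← hxe, hb1eq, hteq]
            abel
          rw [hBeq, hteq, hzeq]
  · -- translation invariance
    intro C hC g
    rcases (hmem𝓑 C).mp hC with ⟨B, hB, τ, z, rfl⟩ | ⟨c, rfl⟩
    · have he : (blk B τ.out z).image (· + g) = blk B τ.out (z + g) := by
        simp only [hblk, Finset.image_image]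
        apply Finset.image_congr
        intro gf _
        simp [Function.comp, add_assoc]
      rw [he]
      exact (hmem𝓑 _).mpr (Or.inl ⟨B, hB, τ, z + g, rfl⟩)
    · have he : (cst c).image (· + g) = cst (c + g.2) := by
        simp only [hcst, Finset.image_image]
        ext a
        simp only [Finset.mem_image, Finset.mem_univ, true_and, Function.comp]
        constructor
        · rintro ⟨g0, rfl⟩
          exact ⟨g0 + g.1, rfl⟩
        · rintro ⟨g0, rfl⟩
          exact ⟨g0 - g.1, by rw [Prod.mk_add_mk]; exact Prod.ext (sub_add_cancel g0 g.1) rfl⟩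
      rw [he]
      exact (hmem𝓑 _).mpr (Or.inr ⟨c + g.2, rfl⟩)
  · -- zero-sum blocks
    intro C hC
    rcases (hmem𝓑 C).mp hC with ⟨B, hB, τ, z, rfl⟩ | ⟨c, rfl⟩
    · simp only [hblk]
      rw [Finset.sum_image (fun a _ b _ h => hbinj τ.out z h)]
      rw [Finset.sum_add_distrib, Finset.sum_const, hFcard B hB]
      have hsum : ∑ gf ∈ B, φ τ.out gf = 0 := by
        refine Prod.ext ?_ ?_
        · rw [Prod.fst_sum]
          have : ∀ gf ∈ B, (φ τ.out gf).1 = gf.1 := fun _ _ => rfl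
          rw [Finset.sum_congr rfl this, ← Prod.fst_sum, hFzs B hB]
          rfl
        · rw [Prod.snd_sum]
          have : ∀ gf ∈ B, (φ τ.out gf).2 = (τ.out : K) * ψ gf.2 := fun _ _ => rfl
          rw [Finset.sum_congr rfl this, ← Finset.mul_sum, ← map_sum, ← Prod.snd_sum,
            hFzs B hB]
          simp
      rw [hsum, zero_add]
      refine Prod.ext ?_ ?_
      · show k • z.1 = (0 : G × K).1
        rw [← hGcard, card_nsmul_eq_zero]
        rfl
      · show k • z.2 = (0 : G × K).2
        rw [nsmul_eq_mul, hkK, zero_mul]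
        rfl
    · simp only [hcst]
      rw [Finset.sum_image (fun a _ b _ h => hcinj c h)]
      refine Prod.ext ?_ ?_
      · rw [Prod.fst_sum]
        simpa using hGzs
      · rw [Prod.snd_sum]
        simp only [Finset.sum_const, Finset.card_univ, hGcard]
        rw [nsmul_eq_mul, hkK, zero_mul]
        rfl
end

section
/- Let k be divisible by 3 but not by 9 (i.e., k ≡ ±3 (mod 9)), let G be a finite abelian group of order v, let H be a subgroup of G of order k, and let 𝓕 be an additive (G,H,k,1) difference family such that the translates of the members of 𝓕 together with the cosets of H form a G-super-regular 2-(v,k,1) design. Then v/k ≡ 1 (mod 3). -/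
section Aux

variable {G : Type*} [AddCommGroup G] [DecidableEq G]

lemma sum_zmod3 {M : Type*} [AddCommMonoid M] (f : ZMod 3 → M) :
    ∑ c : ZMod 3, f c = f 0 + f 1 + f 2 := by
  rw [show (Finset.univ : Finset (ZMod 3)) = {0, 1, 2} from by decide]
  rw [Finset.sum_insert (by decide), Finset.sum_insert (by decide), Finset.sum_singleton,
    add_assoc]

lemma fiber_translate (S : Finset G) (f : G →+ ZMod 3) (t : G)
    (ht : ∀ x, x ∈ S ↔ x + t ∈ S) (c : ZMod 3) :
    (S.filter (fun x => f x = c)).card = (S.filter (fun x => f x = c + f t)).card := by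
  apply Finset.card_bij (fun x _ => x + t)
  · intro a ha
    simp only [Finset.mem_filter] at ha ⊢
    exact ⟨(ht a).1 ha.1, by rw [map_add, ha.2]⟩
  · intro a _ b _ hab
    exact add_right_cancel hab
  · intro b hb
    simp only [Finset.mem_filter] at hb
    refine ⟨b - t, Finset.mem_filter.2 ⟨?_, ?_⟩, by abel⟩
    · exact (ht (b - t)).2 (by rw [sub_add_cancel]; exact hb.1)
    · rw [map_sub, hb.2, add_sub_cancel_right]

lemma card_eq_three_mul_fiber (S : Finset G) (f : G →+ ZMod 3) (h : G)
    (hf : f h ≠ 0) (hcl : ∀ x, x ∈ S ↔ x + h ∈ S) :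
    S.card = 3 * (S.filter (fun x => f x = 1)).card := by
  set F : ZMod 3 → ℕ := fun c => (S.filter (fun x => f x = c)).card with hF
  have key : ∀ c, F c = F (c + f h) := fun c => fiber_translate S f h hcl c
  have h3 : F 0 = F 1 ∧ F 0 = F 2 := by
    rcases (by decide : ∀ x : ZMod 3, x = 0 ∨ x = 1 ∨ x = 2) (f h) with h0 | h1 | h2
    · exact absurd h0 hf
    · have k0 := key 0; have k1 := key 1
      rw [h1, show ((0 : ZMod 3) + 1) = 1 from by decide] at k0
      rw [h1, show ((1 : ZMod 3) + 1) = 2 from by decide] at k1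
      exact ⟨k0, k0.trans k1⟩
    · have k0 := key 0; have k2 := key 2
      rw [h2, show ((0 : ZMod 3) + 2) = 2 from by decide] at k0
      rw [h2, show ((2 : ZMod 3) + 2) = 1 from by decide] at k2
      exact ⟨k0.trans k2, k0⟩
  have hcard : S.card = ∑ c : ZMod 3, F c :=
    Finset.card_eq_sum_card_fiberwise (fun x _ => Finset.mem_univ (f x))
  have h31 := h3.1
  have h32 := h3.2
  have hfold : (S.filter (fun x => f x = 1)).card = F 1 := rfl
  rw [hcard, sum_zmod3 F, hfold]
  omega

lemma block_count (Λ : G →+ ZMod 3) (B : Finset G)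
    (hk3 : (B.card : ZMod 3) = 0) (hzs : ∑ x ∈ B, x = 0) :
    ((((B ×ˢ B).filter (fun pr => Λ (pr.1 - pr.2) = 1)).card : ZMod 3)) = 0 := by
  classical
  set a : ZMod 3 → ℕ := fun c => (B.filter (fun x => Λ x = c)).card with ha
  have hsplit : ((B ×ˢ B).filter (fun pr => Λ (pr.1 - pr.2) = 1)).card
      = ∑ cd ∈ (Finset.univ.filter (fun cd : ZMod 3 × ZMod 3 => cd.1 - cd.2 = 1)),
        a cd.1 * a cd.2 := by
    rw [Finset.card_eq_sum_card_fiberwise (f := fun pr : G × G => (Λ pr.1, Λ pr.2))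
        (t := Finset.univ.filter (fun cd : ZMod 3 × ZMod 3 => cd.1 - cd.2 = 1))
        (fun pr hpr => by
          simp only [Finset.mem_coe, Finset.mem_filter, Finset.mem_univ, true_and] at hpr ⊢
          rw [← map_sub]; exact hpr.2)]
    apply Finset.sum_congr rfl
    intro cd hcd
    simp only [Finset.mem_filter, Finset.mem_univ, true_and] at hcd
    have hprod : ((B ×ˢ B).filter (fun pr => Λ (pr.1 - pr.2) = 1)).filter
          (fun pr => (Λ pr.1, Λ pr.2) = cd)
        = (B.filter (fun x => Λ x = cd.1)) ×ˢ (B.filter (fun x => Λ x = cd.2)) := by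
      ext pr
      simp only [Finset.mem_filter, Finset.mem_product, Prod.ext_iff]
      constructor
      · rintro ⟨⟨⟨h1, h2⟩, _⟩, h4, h5⟩
        exact ⟨⟨h1, h4⟩, h2, h5⟩
      · rintro ⟨⟨h1, h4⟩, h2, h5⟩
        exact ⟨⟨⟨h1, h2⟩, by rw [map_sub, h4, h5, hcd]⟩, h4, h5⟩
    rw [hprod, Finset.card_product]
  have hset : (Finset.univ.filter (fun cd : ZMod 3 × ZMod 3 => cd.1 - cd.2 = 1))
      = {((1 : ZMod 3), (0 : ZMod 3)), (2, 1), (0, 2)} := by decide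
  rw [hset, Finset.sum_insert (by decide), Finset.sum_insert (by decide),
    Finset.sum_singleton] at hsplit
  have hcardsum : B.card = ∑ c : ZMod 3, a c :=
    Finset.card_eq_sum_card_fiberwise (fun x _ => Finset.mem_univ (Λ x))
  have e1 : (a 0 : ZMod 3) + (a 1 : ZMod 3) + (a 2 : ZMod 3) = 0 := by
    rw [sum_zmod3 a] at hcardsum
    calc (a 0 : ZMod 3) + (a 1 : ZMod 3) + (a 2 : ZMod 3)
        = ((a 0 + a 1 + a 2 : ℕ) : ZMod 3) := by push_cast; ring
      _ = (B.card : ZMod 3) := by rw [hcardsum]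
      _ = 0 := hk3
  have e2 : (a 0 : ZMod 3) * 0 + (a 1 : ZMod 3) * 1 + (a 2 : ZMod 3) * 2 = 0 := by
    have h0 : ∑ x ∈ B, Λ x = 0 := by rw [← map_sum, hzs, map_zero]
    have hf := Finset.sum_fiberwise' B (fun x => Λ x) (fun c => c)
    rw [h0] at hf
    have hc : ∀ j : ZMod 3, ∑ _x ∈ B.filter (fun x => Λ x = j), j = (a j : ZMod 3) * j := by
      intro j
      rw [Finset.sum_const, nsmul_eq_mul]
    have h2 : ∑ j : ZMod 3, (a j : ZMod 3) * j = 0 := by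
      rw [← hf]
      exact Finset.sum_congr rfl fun j _ => (hc j).symm
    rw [sum_zmod3 (fun j => (a j : ZMod 3) * j)] at h2
    exact h2
  rw [hsplit]
  push_cast
  generalize hA : ((a 0 : ℕ) : ZMod 3) = α at e1 e2 ⊢
  generalize hB : ((a 1 : ℕ) : ZMod 3) = β at e1 e2 ⊢
  generalize hC : ((a 2 : ℕ) : ZMod 3) = γ at e1 e2 ⊢
  clear hA hB hC
  revert e1 e2
  revert α β γ
  decide

end Aux

/-- If `k ≡ ±3 (mod 9)` (i.e. `3 ∣ k`, `9 ∤ k`) and a `G`-super-regular 2-(v,k,1) design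
is generated by an additive `(G,H,k,1)` difference family (the blocks being the translates
of the base blocks together with the cosets of `H`), then `v/k ≡ 1 (mod 3)`. -/
theorem stmt_9 (G : Type*) [AddCommGroup G] [Fintype G] [DecidableEq G] (v k : ℕ)
    (hv : Fintype.card G = v) (h3k : 3 ∣ k) (h9k : ¬ 9 ∣ k)
    (H : Finset G) (hH0 : (0 : G) ∈ H)
    (hHadd : ∀ a ∈ H, ∀ b ∈ H, a + b ∈ H) (hHneg : ∀ a ∈ H, -a ∈ H)
    (hHcard : H.card = k) (hHzs : ∑ x ∈ H, x = 0)
    (𝓕 : Finset (Finset G))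
    (hFcard : ∀ B ∈ 𝓕, B.card = k)
    (hFzs : ∀ B ∈ 𝓕, ∑ x ∈ B, x = 0)
    (hDF : ∀ g : G,
      (g ∉ H →
        (∑ B ∈ 𝓕, ((B ×ˢ B).filter (fun pr => pr.1 - pr.2 = g)).card) = 1) ∧
      (g ∈ H →
        (∑ B ∈ 𝓕, ((B ×ˢ B).filter (fun pr => pr.1 ≠ pr.2 ∧ pr.1 - pr.2 = g)).card) = 0)) :
    let 𝓑 := ((𝓕 ×ˢ (Finset.univ : Finset G)).image (fun pr => pr.1.image (· + pr.2))) ∪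
      ((Finset.univ : Finset G).image (fun g => H.image (· + g)));
    ((∀ x y : G, x ≠ y → ∃! B, B ∈ 𝓑 ∧ x ∈ B ∧ y ∈ B) ∧
     (∀ B ∈ 𝓑, ∀ g : G, B.image (· + g) ∈ 𝓑) ∧
     (∀ B ∈ 𝓑, ∑ x ∈ B, x = 0)) →
    v / k ≡ 1 [MOD 3] := by
  intro 𝓑 hdesign
  obtain ⟨-, -, hzsB⟩ := hdesign
  classical
  -- exponent of G divides k
  have hexp : ∀ g : G, k • g = 0 := by
    intro g
    have hmem : H.image (· + g) ∈ 𝓑 :=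
      Finset.mem_union_right _ (Finset.mem_image.2 ⟨g, Finset.mem_univ g, rfl⟩)
    have hz := hzsB _ hmem
    rw [Finset.sum_image (fun x _ y _ hxy => by exact add_right_cancel hxy)] at hz
    rw [Finset.sum_add_distrib, hHzs, zero_add, Finset.sum_const, hHcard] at hz
    exact hz
  -- H as an additive subgroup; Cauchy gives an element of order 3
  let HS : AddSubgroup G :=
    { carrier := ↑H
      add_mem' := fun ha hb => hHadd _ ha _ hb
      zero_mem' := hH0
      neg_mem' := fun ha => hHneg _ ha }
  haveI : Fact (Nat.Prime 3) := ⟨by norm_num⟩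
  letI : Fintype HS := Fintype.ofFinset H (fun x => Iff.rfl)
  have hHScard : Fintype.card HS = k := by
    rw [← hHcard]
    exact Fintype.card_ofFinset H (fun x => Iff.rfl)
  obtain ⟨h₀, hord₀⟩ := exists_prime_addOrderOf_dvd_card (G := HS) 3
    (by rw [hHScard]; exact h3k)
  have hh₀H : (h₀ : G) ∈ H := h₀.2
  have hord : addOrderOf (h₀ : G) = 3 := by
    rw [AddSubgroup.addOrderOf_coe]; exact hord₀
  obtain ⟨u, hu⟩ := h3k
  have h3u : ¬ 3 ∣ u := by
    rintro ⟨w, hw⟩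
    exact h9k ⟨w, by omega⟩
  -- the 3-torsion subgroup, a vector space over ZMod 3
  let T : AddSubgroup G :=
    { carrier := {x | 3 • x = 0}
      add_mem' := by
        intro x y hxx hyy
        simp only [Set.mem_setOf_eq] at *
        rw [smul_add, hxx, hyy, add_zero]
      zero_mem' := by simp
      neg_mem' := by
        intro x hxx
        simp only [Set.mem_setOf_eq] at *
        rw [smul_neg, hxx, neg_zero] }
  haveI : Module (ZMod 3) T := AddCommGroup.zmodModule (n := 3) (by
    rintro ⟨x, hx⟩
    ext
    simpa using (show 3 • x = 0 from hx))
  have hmemT : ∀ g : G, u • g ∈ T := by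
    intro g
    show 3 • (u • g) = 0
    rw [smul_smul, show 3 * u = k from hu.symm]
    exact hexp g
  let ψ : G →+ T := AddMonoidHom.mk' (fun g => ⟨u • g, hmemT g⟩)
    (fun x y => by ext; simp [smul_add])
  have hψh : ψ (h₀ : G) ≠ 0 := by
    intro hc
    have hc' : u • (h₀ : G) = 0 := congrArg Subtype.val hc
    have hdvd : addOrderOf (h₀ : G) ∣ u := addOrderOf_dvd_iff_nsmul_eq_zero.2 hc'
    rw [hord] at hdvd
    exact h3u hdvd
  obtain ⟨φ, hφ⟩ : ∃ φ : Module.Dual (ZMod 3) T, φ (ψ (h₀ : G)) ≠ 0 := by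
    by_contra hc
    push_neg at hc
    exact hψh ((Module.forall_dual_apply_eq_zero_iff (ZMod 3) (ψ (h₀ : G))).1 hc)
  set Λ : G →+ ZMod 3 := φ.toAddMonoidHom.comp ψ with hΛ
  have hΛh : Λ (h₀ : G) ≠ 0 := hφ
  -- fiber sizes
  have hva : v = 3 * (Finset.univ.filter (fun x : G => Λ x = 1)).card := by
    rw [← hv, ← Finset.card_univ]
    exact card_eq_three_mul_fiber Finset.univ Λ (h₀ : G) hΛh (fun x => by simp)
  have hclH : ∀ x, x ∈ H ↔ x + (h₀ : G) ∈ H := by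
    intro x
    constructor
    · intro hx; exact hHadd _ hx _ hh₀H
    · intro hx
      have := hHadd _ hx _ (hHneg _ hh₀H)
      rwa [add_neg_cancel_right] at this
  have hkb : k = 3 * (H.filter (fun x => Λ x = 1)).card := by
    rw [← hHcard]
    exact card_eq_three_mul_fiber H Λ (h₀ : G) hΛh hclH
  -- the grand count: the differences with Λ-value 1 coming from base blocks
  have hblock : ∀ B ∈ 𝓕, ((B ×ˢ B).filter (fun pr => Λ (pr.1 - pr.2) = 1)).card
      = ∑ g ∈ Finset.univ.filter (fun g : G => Λ g = 1),
          ((B ×ˢ B).filter (fun pr => pr.1 - pr.2 = g)).card := by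
    intro B _
    rw [Finset.card_eq_sum_card_fiberwise (f := fun pr : G × G => pr.1 - pr.2)
        (t := Finset.univ.filter (fun g : G => Λ g = 1))
        (fun pr hpr => Finset.mem_filter.2 ⟨Finset.mem_univ _, (Finset.mem_filter.1 hpr).2⟩)]
    apply Finset.sum_congr rfl
    intro g hg
    simp only [Finset.mem_filter, Finset.mem_univ, true_and] at hg
    rw [Finset.filter_filter]
    congr 1
    apply Finset.filter_congr
    intro pr _
    constructor
    · exact fun hpr => hpr.2
    · exact fun hpr => ⟨by show Λ (pr.1 - pr.2) = 1; rw [hpr]; exact hg, hpr⟩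
  have hTot2 : (∑ B ∈ 𝓕, ((B ×ˢ B).filter (fun pr => Λ (pr.1 - pr.2) = 1)).card)
      = (Finset.univ.filter (fun g : G => Λ g = 1 ∧ g ∉ H)).card := by
    rw [Finset.sum_congr rfl hblock, Finset.sum_comm]
    have hg1 : ∀ g ∈ Finset.univ.filter (fun g : G => Λ g = 1),
        (∑ B ∈ 𝓕, ((B ×ˢ B).filter (fun pr => pr.1 - pr.2 = g)).card)
          = if g ∉ H then 1 else 0 := by
      intro g hg
      simp only [Finset.mem_filter, Finset.mem_univ, true_and] at hg
      by_cases hgH : g ∈ H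
      · rw [if_neg (by simpa using hgH)]
        have hg0 : g ≠ 0 := by
          intro h0
          rw [h0, map_zero] at hg
          exact one_ne_zero hg.symm
        have heq : ∀ B ∈ 𝓕, ((B ×ˢ B).filter (fun pr => pr.1 - pr.2 = g)).card
            = ((B ×ˢ B).filter (fun pr => pr.1 ≠ pr.2 ∧ pr.1 - pr.2 = g)).card := by
          intro B _
          congr 1
          apply Finset.filter_congr
          intro pr _
          constructor
          · intro hpr
            refine ⟨fun he => ?_, hpr⟩
            rw [he, sub_self] at hpr
            exact hg0 hpr.symm
          · exact fun hpr => hpr.2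
        rw [Finset.sum_congr rfl heq]
        exact (hDF g).2 hgH
      · rw [if_pos hgH]
        exact (hDF g).1 hgH
    rw [Finset.sum_congr rfl hg1, ← Finset.card_filter, Finset.filter_filter]
  -- split the Λ-fiber of 1 by membership in H
  have e3 : (Finset.univ.filter (fun x : G => Λ x = 1)).filter (fun g => g ∈ H)
      = H.filter (fun x => Λ x = 1) := by
    ext x
    simp only [Finset.mem_filter, Finset.mem_univ, true_and]
    exact and_comm
  have e4 := Finset.card_filter_add_card_filter_not
      (s := Finset.univ.filter (fun x : G => Λ x = 1)) (p := fun g => g ∈ H)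
  rw [e3, Finset.filter_filter] at e4
  -- each block contributes 0 mod 3
  have hTotcast : (((∑ B ∈ 𝓕, ((B ×ˢ B).filter (fun pr => Λ (pr.1 - pr.2) = 1)).card) : ℕ)
      : ZMod 3) = 0 := by
    rw [Nat.cast_sum]
    apply Finset.sum_eq_zero
    intro B hB
    exact block_count Λ B
      (by rw [hFcard B hB]; exact (ZMod.natCast_eq_zero_iff k 3).2 ⟨u, hu⟩)
      (hFzs B hB)
  rw [hTot2] at hTotcast
  -- wrap up
  have hdvd : k ∣ v := by
    have := AddSubgroup.card_addSubgroup_dvd_card HS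
    rwa [Nat.card_eq_fintype_card, Nat.card_eq_fintype_card, hHScard, hv] at this
  have hq : v = k * (v / k) := (Nat.mul_div_cancel' hdvd).symm
  set aC := (Finset.univ.filter (fun x : G => Λ x = 1)).card with haC
  set bC := (H.filter (fun x => Λ x = 1)).card with hbC
  set q := v / k with hqdef
  have haq : aC = bC * q := by
    have : 3 * aC = 3 * (bC * q) := by
      rw [← hva, hq, hkb]
      ring
    omega
  have hbne : (bC : ZMod 3) ≠ 0 := by
    intro hc
    obtain ⟨w, hw⟩ := (ZMod.natCast_eq_zero_iff bC 3).1 hc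
    exact h9k ⟨w, by omega⟩
  have hacast : (aC : ZMod 3) = (bC : ZMod 3) := by
    have : (((bC + (Finset.univ.filter (fun g : G => Λ g = 1 ∧ g ∉ H)).card) : ℕ) : ZMod 3)
        = (aC : ZMod 3) := by rw [e4]
    rw [Nat.cast_add, hTotcast, add_zero] at this
    exact this.symm
  have hq1 : (q : ZMod 3) = 1 := by
    apply mul_left_cancel₀ hbne
    rw [mul_one, ← Nat.cast_mul, ← haq, hacast]
  have := (ZMod.natCast_eq_natCast_iff q 1 3).1 (by rw [hq1, Nat.cast_one])
  exact this
end

section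
/- There is no G-super-regular 2-(v,k,1) design with k divisible by 3 but not by 9 and with v/k ≡ 2 (mod 3): if G is a finite abelian group of order v, k divides v, 3 | k, 9 ∤ k and v/k ≡ 2 (mod 3), then no set of k-element subsets of G that is closed under translation, has all blocks zero-sum, and contains every pair of distinct elements of G in exactly one block can exist. -/
open Finset

/-! ### Auxiliary lemmas -/

lemma zmod3_cases (a : ZMod 3) : a = 0 ∨ a = 1 ∨ a = 2 := by revert a; decide

lemma zmod3_solve : ∀ a b c : ZMod 3, a + b + c = 0 → b + c * 2 = 0 → a = b ∧ c = b := by decide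

lemma zmod3_sub_one_zero : (0 : ZMod 3) - 1 = 2 := by decide

lemma zmod3_two : (2 : ZMod 3) = 1 + 1 := by decide

lemma zmod3_one_ne_two : (1 : ZMod 3) ≠ 2 := by decide

lemma zmod3_final : ∀ N c : ZMod 3, c ≠ 0 → N * c = c * 2 →
    N * (c * c) = (c * 2) * (c * 2) → False := by decide

lemma zmod3_sum {M : Type*} [AddCommMonoid M] (f : ZMod 3 → M) :
    ∑ i : ZMod 3, f i = f 0 + f 1 + f 2 := by
  have huniv : (Finset.univ : Finset (ZMod 3)) = {0, 1, 2} := by decide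
  rw [huniv, Finset.sum_insert (by decide), Finset.sum_insert (by decide),
    Finset.sum_singleton, add_assoc]

/-- Sum of a `σ`-invariant `ZMod 3`-valued function over a finset invariant under a
map `σ` of order dividing 3 equals the sum over the fixed points. -/
lemma sum_eq_sum_fixed_aux {α : Type*} [DecidableEq α] (σ : α → α)
    (hσinj : Function.Injective σ) (f : α → ZMod 3) :
    ∀ (n : ℕ) (S : Finset α), S.card ≤ n → (∀ x ∈ S, σ x ∈ S) →
      (∀ x ∈ S, σ (σ (σ x)) = x) → (∀ x ∈ S, f (σ x) = f x) →
      ∑ x ∈ S, f x = ∑ x ∈ S.filter (fun x => σ x = x), f x := by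
  intro n
  induction n with
  | zero =>
    intro S hcard _ _ _
    have : S = ∅ := Finset.card_eq_zero.mp (Nat.le_zero.mp hcard)
    subst this; simp
  | succ n ih =>
    intro S hcard hmap h3 hf
    by_cases hall : ∀ x ∈ S, σ x = x
    · rw [Finset.filter_true_of_mem hall]
    · push_neg at hall
      obtain ⟨x, hxS, hxne⟩ := hall
      have hσxS : σ x ∈ S := hmap x hxS
      have hσσxS : σ (σ x) ∈ S := hmap _ hσxS
      have hx3 : σ (σ (σ x)) = x := h3 x hxS
      have hne2 : σ (σ x) ≠ x := by
        intro h; rw [h] at hx3; exact hxne hx3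
      have hne12 : σ (σ x) ≠ σ x := fun h => hxne (hσinj h)
      have hne1 : σ x ≠ x := hxne
      set O : Finset α := {x, σ x, σ (σ x)} with hO
      have hOsub : O ⊆ S := by
        intro y hy
        simp only [hO, Finset.mem_insert, Finset.mem_singleton] at hy
        rcases hy with rfl | rfl | rfl <;> assumption
      have hOne : O.Nonempty := ⟨x, by simp [hO]⟩
      have hss : S \ O ⊂ S := Finset.sdiff_ssubset hOsub hOne
      have hcard' : (S \ O).card ≤ n := by
        have := Finset.card_lt_card hss; omega
      have hOnotfix : ∀ y ∈ O, σ y ≠ y := by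
        intro y hy
        simp only [hO, Finset.mem_insert, Finset.mem_singleton] at hy
        rcases hy with rfl | rfl | rfl
        · exact hne1
        · exact hne12
        · intro h; rw [hx3] at h; exact hne2 h.symm
      have hmap' : ∀ y ∈ S \ O, σ y ∈ S \ O := by
        intro y hy
        rw [Finset.mem_sdiff] at hy ⊢
        obtain ⟨hyS, hyO⟩ := hy
        refine ⟨hmap y hyS, ?_⟩
        intro hσyO
        simp only [hO, Finset.mem_insert, Finset.mem_singleton] at hσyO
        apply hyO
        simp only [hO, Finset.mem_insert, Finset.mem_singleton]
        rcases hσyO with h | h | h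
        · right; right
          have h2 : σ (σ (σ y)) = σ (σ x) := by rw [h]
          rw [h3 y hyS] at h2; exact h2
        · left; exact hσinj h
        · right; left; exact hσinj h
      have hsplit := Finset.sum_sdiff hOsub (f := f)
      have hOsum : ∑ y ∈ O, f y = 0 := by
        have e1 : f (σ x) = f x := hf x hxS
        have e2 : f (σ (σ x)) = f x := by rw [hf (σ x) hσxS, e1]
        have hsum : ∑ y ∈ O, f y = f x + (f (σ x) + f (σ (σ x))) := by
          rw [hO]
          rw [Finset.sum_insert (by
              simp only [Finset.mem_insert, Finset.mem_singleton]
              push_neg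
              exact ⟨fun h => hne1 h.symm, fun h => hne2 h.symm⟩),
            Finset.sum_insert (by
              simp only [Finset.mem_singleton]
              exact fun h => hne12 h.symm),
            Finset.sum_singleton]
        rw [hsum, e1, e2]
        have h3f : ∀ a : ZMod 3, a + (a + a) = 0 := by decide
        exact h3f _
      have hfilter : S.filter (fun y => σ y = y) = (S \ O).filter (fun y => σ y = y) := by
        apply Finset.ext
        intro y
        simp only [Finset.mem_filter, Finset.mem_sdiff]
        constructor
        · rintro ⟨hyS, hfix⟩
          exact ⟨⟨hyS, fun hyO => hOnotfix y hyO hfix⟩, hfix⟩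
        · rintro ⟨⟨hyS, _⟩, hfix⟩; exact ⟨hyS, hfix⟩
      have ihres := ih (S \ O) hcard' hmap'
        (fun y hy => h3 y (Finset.mem_sdiff.mp hy).1)
        (fun y hy => hf y (Finset.mem_sdiff.mp hy).1)
      rw [hfilter, ← ihres, ← hsplit, hOsum, add_zero]

/-- Any finite abelian group whose order is divisible by `3` but not by `9` admits a
homomorphism onto `ZMod 3`, hitting `1` on an element of order `3`. -/
lemma exists_hom_zmod3 (G : Type*) [AddCommGroup G] [Fintype G] (v : ℕ)
    (hv : Fintype.card G = v) (h3v : 3 ∣ v) (h9v : ¬ 9 ∣ v) :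
    ∃ (φ : (G →+ ZMod 3)) (u : G), φ u = 1 ∧ u + u + u = 0 := by
  classical
  haveI : Fact (Nat.Prime 3) := ⟨by norm_num⟩
  obtain ⟨u, hu⟩ := exists_prime_addOrderOf_dvd_card 3 (hv ▸ h3v)
  have huuu : u + u + u = 0 := by
    have h := addOrderOf_nsmul_eq_zero u
    rw [hu] at h
    rwa [show (3 : ℕ) • u = u + u + u by rw [succ_nsmul, two_nsmul]] at h
  set ψ : G →+ G := AddMonoidHom.mk' (fun x => (v / 3) • x) (fun a b => smul_add _ a b) with hψ
  have hψ3 : ∀ x : G, (3 : ℕ) • ψ x = 0 := by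
    intro x
    have h : (3 : ℕ) • ((v / 3) • x) = v • x := by
      rw [smul_smul, Nat.mul_div_cancel' h3v]
    simp only [hψ, AddMonoidHom.mk'_apply]
    rw [h, ← hv, card_nsmul_eq_zero]
  set w : G := ψ u with hwdef
  have hw0 : w ≠ 0 := by
    intro h
    have h1 : addOrderOf u ∣ v / 3 := addOrderOf_dvd_iff_nsmul_eq_zero.mpr h
    rw [hu] at h1
    exact h9v (by omega)
  have hwww : w + w + w = 0 := by
    have h := hψ3 u
    rwa [show (3 : ℕ) • ψ u = ψ u + ψ u + ψ u by rw [succ_nsmul, two_nsmul], ← hwdef] at h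
  set R := ψ.range with hR
  have hwR : w ∈ R := ⟨u, rfl⟩
  set w' : ↥R := ⟨w, hwR⟩ with hw'
  have hw'0 : w' ≠ 0 := fun h => hw0 (congrArg Subtype.val h)
  have hR3 : ∀ y : ↥R, (3 : ℕ) • y = 0 := by
    intro y
    obtain ⟨x, hx⟩ := y.2
    apply Subtype.ext
    show ((3 : ℕ) • y : ↥R).1 = 0
    rw [AddSubgroup.coe_nsmul]
    rw [show (y : G) = ψ x from hx.symm, hψ3 x]
  have hRdvd : Fintype.card ↥R ∣ v := by
    have h := AddSubgroup.card_addSubgroup_dvd_card R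
    rwa [Nat.card_eq_fintype_card, Nat.card_eq_fintype_card, hv] at h
  have hprime : ∀ p : ℕ, p.Prime → p ∣ Fintype.card ↥R → p = 3 := by
    intro p hp hpdvd
    haveI : Fact (Nat.Prime p) := ⟨hp⟩
    obtain ⟨y, hy⟩ := exists_prime_addOrderOf_dvd_card p hpdvd
    have h1 : addOrderOf y ∣ 3 := addOrderOf_dvd_iff_nsmul_eq_zero.mpr (hR3 y)
    rw [hy] at h1
    exact (Nat.prime_dvd_prime_iff_eq hp (by norm_num)).mp h1
  haveI : Nontrivial ↥R := ⟨⟨0, w', fun h => hw'0 h.symm⟩⟩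
  have hne1 : Fintype.card ↥R ≠ 1 := Fintype.one_lt_card.ne'
  have hcardR : Fintype.card ↥R = 3 := by
    obtain ⟨p, hp, hpdvd⟩ := Nat.exists_prime_and_dvd hne1
    have hp3 := hprime p hp hpdvd
    subst hp3
    obtain ⟨s, hs⟩ := hpdvd
    by_cases hs1 : s = 1
    · rw [hs, hs1]
    · exfalso
      obtain ⟨q, hq, hqdvd⟩ := Nat.exists_prime_and_dvd hs1
      have hqcard : q ∣ Fintype.card ↥R := hs ▸ Dvd.dvd.mul_left hqdvd 3
      have hq3 := hprime q hq hqcard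
      subst hq3
      have h9card : 9 ∣ Fintype.card ↥R := by
        obtain ⟨t, ht⟩ := hqdvd
        rw [hs, ht]; ring_nf; omega
      exact h9v (h9card.trans hRdvd)
  set f : ℤ →+ ↥R := zmultiplesHom ↥R w' with hf
  have hf3 : f 3 = 0 := by
    rw [hf, zmultiplesHom_apply, show (3 : ℤ) = ((3 : ℕ) : ℤ) by norm_num, natCast_zsmul]
    exact hR3 w'
  set h : ZMod 3 →+ ↥R := ZMod.lift 3 ⟨f, hf3⟩ with hh
  have h1 : h 1 = w' := by
    have hc : ((1 : ℤ) : ZMod 3) = 1 := by norm_num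
    rw [hh, ← hc, ZMod.lift_coe]
    simp [hf, zmultiplesHom_apply]
  have hinj : Function.Injective h := by
    rw [injective_iff_map_eq_zero]
    intro a ha
    rcases zmod3_cases a with rfl | rfl | rfl
    · rfl
    · rw [h1] at ha; exact absurd ha hw'0
    · exfalso
      rw [zmod3_two, map_add, h1] at ha
      apply hw0
      have hcoe : w + w = 0 := by
        have := congrArg Subtype.val ha
        simpa using this
      rw [hcoe, zero_add] at hwww
      exact hwww
  have hbij : Function.Bijective h :=
    (Fintype.bijective_iff_injective_and_card h).mpr ⟨hinj, by rw [ZMod.card, hcardR]⟩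
  set e := AddEquiv.ofBijective h hbij with he
  refine ⟨(e.symm.toAddMonoidHom.comp ψ.rangeRestrict), u, ?_, huuu⟩
  show e.symm (ψ.rangeRestrict u) = 1
  have hres : ψ.rangeRestrict u = w' := Subtype.ext (by
    simp [AddMonoidHom.coe_rangeRestrict, hwdef]
    rfl)
  rw [hres, AddEquiv.symm_apply_eq]
  show w' = e 1
  rw [he]
  exact h1.symm

/-- Double counting: pairs between two fibers. -/
lemma design_pair_count {G : Type*} [Fintype G] [DecidableEq G] (𝓑 : Finset (Finset G))
    (hpair : ∀ x y : G, x ≠ y → ∃! B, B ∈ 𝓑 ∧ x ∈ B ∧ y ∈ B)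
    (F1 F2 : Finset G) (hd : ∀ x ∈ F1, ∀ y ∈ F2, x ≠ y) :
    ∑ B ∈ 𝓑, (B ∩ F1).card * (B ∩ F2).card = F1.card * F2.card := by
  have hdisj : ∀ B ∈ 𝓑, ∀ B' ∈ 𝓑, B ≠ B' →
      Disjoint ((B ∩ F1) ×ˢ (B ∩ F2)) ((B' ∩ F1) ×ˢ (B' ∩ F2)) := by
    intro B hB B' hB' hne
    rw [Finset.disjoint_left]
    rintro ⟨x, y⟩ hp hp'
    rw [Finset.mem_product, Finset.mem_inter, Finset.mem_inter] at hp hp'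
    have hxy : x ≠ y := hd x hp.1.2 y hp.2.2
    obtain ⟨Bu, _, hBu⟩ := hpair x y hxy
    exact hne ((hBu B ⟨hB, hp.1.1, hp.2.1⟩).trans (hBu B' ⟨hB', hp'.1.1, hp'.2.1⟩).symm)
  have hunion : 𝓑.biUnion (fun B => (B ∩ F1) ×ˢ (B ∩ F2)) = F1 ×ˢ F2 := by
    apply Finset.ext
    rintro ⟨x, y⟩
    simp only [Finset.mem_biUnion, Finset.mem_product, Finset.mem_inter]
    constructor
    · rintro ⟨B, hB, ⟨hx1, hx2⟩, hy1, hy2⟩; exact ⟨hx2, hy2⟩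
    · rintro ⟨hx, hy⟩
      obtain ⟨B, ⟨hB, hxB, hyB⟩, -⟩ := hpair x y (hd x hx y hy)
      exact ⟨B, hB, ⟨hxB, hx⟩, hyB, hy⟩
  calc ∑ B ∈ 𝓑, (B ∩ F1).card * (B ∩ F2).card
      = ∑ B ∈ 𝓑, ((B ∩ F1) ×ˢ (B ∩ F2)).card :=
        Finset.sum_congr rfl fun B _ => (Finset.card_product _ _).symm
    _ = (𝓑.biUnion (fun B => (B ∩ F1) ×ˢ (B ∩ F2))).card := (Finset.card_biUnion hdisj).symm
    _ = (F1 ×ˢ F2).card := by rw [hunion]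
    _ = F1.card * F2.card := Finset.card_product _ _

/-- Double counting: each point is on `(card G - 1)/(k-1)` blocks. -/
lemma design_deg_count {G : Type*} [Fintype G] [DecidableEq G] (𝓑 : Finset (Finset G)) (k : ℕ)
    (hBcard : ∀ B ∈ 𝓑, B.card = k)
    (hpair : ∀ x y : G, x ≠ y → ∃! B, B ∈ 𝓑 ∧ x ∈ B ∧ y ∈ B) (x : G) :
    (𝓑.filter (fun B => x ∈ B)).card * (k - 1) = Fintype.card G - 1 := by
  have hdisj : ∀ B ∈ 𝓑.filter (fun B => x ∈ B), ∀ B' ∈ 𝓑.filter (fun B => x ∈ B), B ≠ B' →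
      Disjoint (B.erase x) (B'.erase x) := by
    intro B hB B' hB' hne
    rw [Finset.mem_filter] at hB hB'
    rw [Finset.disjoint_left]
    intro y hy hy'
    rw [Finset.mem_erase] at hy hy'
    obtain ⟨Bu, -, hBu⟩ := hpair x y (Ne.symm hy.1)
    exact hne ((hBu B ⟨hB.1, hB.2, hy.2⟩).trans (hBu B' ⟨hB'.1, hB'.2, hy'.2⟩).symm)
  have hunion : (𝓑.filter (fun B => x ∈ B)).biUnion (fun B => B.erase x)
      = Finset.univ.erase x := by
    apply Finset.ext
    intro y
    simp only [Finset.mem_biUnion, Finset.mem_erase, Finset.mem_filter, Finset.mem_univ,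
      and_true]
    constructor
    · rintro ⟨B, ⟨hB, hxB⟩, hyx, hyB⟩; exact hyx
    · intro hyx
      obtain ⟨B, ⟨hB, hxB, hyB⟩, -⟩ := hpair x y (Ne.symm hyx)
      exact ⟨B, ⟨hB, hxB⟩, hyx, hyB⟩
  calc (𝓑.filter (fun B => x ∈ B)).card * (k - 1)
      = ∑ _B ∈ 𝓑.filter (fun B => x ∈ B), (k - 1) := by rw [Finset.sum_const, smul_eq_mul]
    _ = ∑ B ∈ 𝓑.filter (fun B => x ∈ B), (B.erase x).card :=
        Finset.sum_congr rfl (fun B hB => by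
          rw [Finset.mem_filter] at hB
          rw [Finset.card_erase_of_mem hB.2, hBcard B hB.1])
    _ = ((𝓑.filter (fun B => x ∈ B)).biUnion (fun B => B.erase x)).card :=
        (Finset.card_biUnion hdisj).symm
    _ = (Finset.univ.erase x).card := by rw [hunion]
    _ = Fintype.card G - 1 := by
        rw [Finset.card_erase_of_mem (Finset.mem_univ x), Finset.card_univ]

/-- Swapping a double count. -/
lemma design_swap {G : Type*} [Fintype G] [DecidableEq G] (𝓑 : Finset (Finset G))
    (F : Finset G) :
    ∑ B ∈ 𝓑, (B ∩ F).card = ∑ x ∈ F, (𝓑.filter (fun B => x ∈ B)).card := by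
  have h1 : ∀ B : Finset G, (B ∩ F).card = ∑ x ∈ F, if x ∈ B then 1 else 0 := by
    intro B
    rw [Finset.inter_comm, ← Finset.filter_mem_eq_inter, Finset.card_filter]
  have h2 : ∀ x : G, (𝓑.filter (fun B => x ∈ B)).card = ∑ B ∈ 𝓑, if x ∈ B then 1 else 0 :=
    fun x => Finset.card_filter _ _
  simp_rw [h1, h2]
  exact Finset.sum_comm

/-- No `G`-super-regular 2-(v,k,1) design exists when `3 ∣ k`, `9 ∤ k` and
`v/k ≡ 2 (mod 3)`. -/
theorem stmt_10 (G : Type*) [AddCommGroup G] [Fintype G] [DecidableEq G] (v k : ℕ)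
    (hv : Fintype.card G = v) (hk2 : 2 ≤ k) (hkv : k ∣ v)
    (h3 : 3 ∣ k) (h9 : ¬ 9 ∣ k) (hvk : v / k ≡ 2 [MOD 3]) :
    ¬ ∃ 𝓑 : Finset (Finset G),
        (∀ B ∈ 𝓑, B.card = k) ∧
        (∀ x y : G, x ≠ y → ∃! B, B ∈ 𝓑 ∧ x ∈ B ∧ y ∈ B) ∧
        (∀ B ∈ 𝓑, ∀ g : G, B.image (· + g) ∈ 𝓑) ∧
        (∀ B ∈ 𝓑, ∑ x ∈ B, x = 0) := by
  classical
  rintro ⟨𝓑, hBcard, hpair, htrans, hzero⟩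
  have h3v : 3 ∣ v := h3.trans hkv
  obtain ⟨k', hk'⟩ := h3
  have hk3' : ¬ 3 ∣ k' := by
    rintro ⟨t, ht⟩
    exact h9 ⟨t, by omega⟩
  have hm : v = k * (v / k) := (Nat.mul_div_cancel' hkv).symm
  have hm2 : v / k % 3 = 2 := by
    have h := hvk; rw [Nat.ModEq] at h; omega
  have hv3eq : v = 3 * (k' * (v / k)) := by
    calc v = k * (v / k) := hm
      _ = 3 * (k' * (v / k)) := by rw [hk']; ring
  have h9v : ¬ 9 ∣ v := by
    rintro ⟨s, hs⟩
    have h3km : 3 ∣ k' * (v / k) := by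
      refine ⟨s, Nat.eq_of_mul_eq_mul_left (show 0 < 3 by norm_num) ?_⟩
      calc 3 * (k' * (v / k)) = v := hv3eq.symm
        _ = 3 * (3 * s) := by rw [hs]; ring
    rcases (Nat.Prime.dvd_mul (by norm_num)).mp h3km with h | h
    · exact hk3' h
    · omega
  have hvpos : 1 ≤ v := hv ▸ Fintype.card_pos
  obtain ⟨φ, u, hφu, huuu⟩ := exists_hom_zmod3 G v hv h3v h9v
  -- the fibers of φ
  set F : ZMod 3 → Finset G := fun i => Finset.univ.filter (fun x => φ x = i) with hFdef
  have hmemF : ∀ (i : ZMod 3) (x : G), x ∈ F i ↔ φ x = i := by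
    intro i x; simp [hFdef]
  have hnfilter : ∀ (B : Finset G) (i : ZMod 3), B ∩ F i = B.filter (fun x => φ x = i) := by
    intro B i
    apply Finset.ext
    intro x
    simp [hFdef, Finset.mem_inter, Finset.mem_filter]
  have hk0 : ((k : ℕ) : ZMod 3) = 0 := (ZMod.natCast_eq_zero_iff k 3).mpr ⟨k', hk'⟩
  -- the three fiber counts of any block sum to k
  have hcards : ∀ B ∈ 𝓑, (B ∩ F 0).card + (B ∩ F 1).card + (B ∩ F 2).card = k := by
    intro B hB
    have hc := Finset.card_eq_sum_card_fiberwise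
      (f := fun x : G => φ x) (s := B) (t := Finset.univ) (fun x _ => Finset.mem_univ _)
    rw [hBcard B hB] at hc
    rw [zmod3_sum (fun j => (B.filter (fun x => φ x = j)).card)] at hc
    rw [hnfilter B 0, hnfilter B 1, hnfilter B 2]
    omega
  -- the three fiber counts of any block are congruent mod 3
  have hcong : ∀ B ∈ 𝓑, ∀ i : ZMod 3,
      ((B ∩ F i).card : ZMod 3) = ((B ∩ F 1).card : ZMod 3) := by
    intro B hB
    have hsum0 : ∑ x ∈ B, φ x = 0 := by rw [← map_sum, hzero B hB, map_zero]
    have hfib := Finset.sum_fiberwise B (fun x => φ x) (fun x => φ x)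
    have hinner : ∀ j : ZMod 3, ∑ x ∈ B.filter (fun x => φ x = j), φ x
        = ((B ∩ F j).card : ZMod 3) * j := by
      intro j
      calc ∑ x ∈ B.filter (fun x => φ x = j), φ x
          = ∑ _x ∈ B.filter (fun x => φ x = j), j :=
            Finset.sum_congr rfl (fun x hx => (Finset.mem_filter.mp hx).2)
        _ = (B.filter (fun x => φ x = j)).card • j := Finset.sum_const j
        _ = ((B ∩ F j).card : ZMod 3) * j := by rw [← hnfilter B j, nsmul_eq_mul]
    have hA : ∑ j : ZMod 3, ((B ∩ F j).card : ZMod 3) * j = 0 := by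
      rw [← hsum0, ← hfib]
      exact Finset.sum_congr rfl (fun j _ => (hinner j).symm)
    rw [zmod3_sum (fun j => ((B ∩ F j).card : ZMod 3) * j)] at hA
    rw [mul_zero, zero_add, mul_one] at hA
    have hsumcast : ((B ∩ F 0).card : ZMod 3) + ((B ∩ F 1).card : ZMod 3)
        + ((B ∩ F 2).card : ZMod 3) = 0 := by
      have hcast := congrArg (fun t : ℕ => (t : ZMod 3)) (hcards B hB)
      push_cast at hcast
      rw [hcast, hk0]
    obtain ⟨hab, hcb⟩ := zmod3_solve _ _ _ hsumcast hA
    intro i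
    rcases zmod3_cases i with rfl | rfl | rfl
    · exact hab
    · rfl
    · exact hcb
  -- translation by u shifts fibers
  have htrn : ∀ (B : Finset G) (i : ZMod 3),
      (B.image (· + u)) ∩ F i = (B ∩ F (i - 1)).image (· + u) := by
    intro B i
    rw [hnfilter, hnfilter, Finset.filter_image]
    congr 1
    apply Finset.filter_congr
    intro x _
    simp only [map_add, hφu]
    exact eq_sub_iff_add_eq.symm
  have hcardtr : ∀ (B : Finset G) (i : ZMod 3),
      ((B.image (· + u)) ∩ F i).card = (B ∩ F (i - 1)).card := by
    intro B i
    rw [htrn, Finset.card_image_of_injective _ (add_left_injective u)]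
  -- σ has order dividing 3
  have hσ3 : ∀ B : Finset G, ((B.image (· + u)).image (· + u)).image (· + u) = B := by
    intro B
    have hxuuu : ∀ x : G, x + u + u + u = x := fun x => by
      rw [add_assoc, add_assoc, ← add_assoc u u u, huuu, add_zero]
    apply Finset.ext
    intro y
    simp only [Finset.mem_image]
    constructor
    · rintro ⟨a, ⟨b, ⟨c, hc, rfl⟩, rfl⟩, rfl⟩
      rwa [hxuuu c]
    · intro hy
      exact ⟨y + u + u, ⟨y + u, ⟨y, hy, rfl⟩, rfl⟩, hxuuu y⟩
  -- fixed blocks have all fiber counts equal to k'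
  have hfixc : ∀ B ∈ 𝓑, B.image (· + u) = B →
      ((B ∩ F 1).card : ZMod 3) = (k' : ZMod 3) := by
    intro B hB hfix
    have he : ∀ i : ZMod 3, (B ∩ F i).card = (B ∩ F (i - 1)).card := by
      intro i; rw [← hcardtr B i, hfix]
    have h10 : (B ∩ F 1).card = (B ∩ F 0).card := by
      have h := he 1; rwa [sub_self] at h
    have h02 : (B ∩ F 0).card = (B ∩ F 2).card := by
      have h := he 0; rwa [zmod3_sub_one_zero] at h
    have hsumk := hcards B hB
    have : (B ∩ F 1).card = k' := by omega
    rw [this]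
  -- every point has degree ≡ 1 mod 3
  have hdeg : ∀ x : G, ((𝓑.filter (fun B => x ∈ B)).card : ZMod 3) = 1 := by
    intro x
    have h := design_deg_count 𝓑 k hBcard hpair x
    rw [hv] at h
    have hc := congrArg (fun t : ℕ => (t : ZMod 3)) h
    rw [Nat.cast_mul, Nat.cast_sub (by omega : 1 ≤ k), Nat.cast_sub hvpos, Nat.cast_one] at hc
    rw [hk0, (ZMod.natCast_eq_zero_iff v 3).mpr h3v] at hc
    rw [zero_sub, mul_neg_one, neg_inj] at hc
    exact hc
  -- fiber sizes
  have hFcard : ∀ i : ZMod 3, (F i).card = (F 1).card := by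
    intro i
    set g : G := (i - 1).val • u with hg
    have hφg : φ g = i - 1 := by
      rw [hg, map_nsmul, hφu, nsmul_eq_mul, mul_one, ZMod.natCast_val, ZMod.cast_id]
    have himg : F i = (F 1).image (· + g) := by
      apply Finset.ext
      intro y
      constructor
      · intro hy
        rw [hmemF] at hy
        rw [Finset.mem_image]
        refine ⟨y - g, ?_, sub_add_cancel y g⟩
        rw [hmemF, map_sub, hφg, hy, sub_sub_cancel]
      · intro hy
        rw [Finset.mem_image] at hy
        obtain ⟨x, hx, rfl⟩ := hy
        rw [hmemF] at hx ⊢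
        rw [map_add, hx, hφg, add_comm, sub_add_cancel]
    rw [himg, Finset.card_image_of_injective _ (add_left_injective g)]
  have htotF : 3 * (F 1).card = v := by
    have hc := Finset.card_eq_sum_card_fiberwise
      (f := fun x : G => φ x) (s := Finset.univ) (t := Finset.univ)
      (fun x _ => Finset.mem_univ _)
    rw [Finset.card_univ, hv] at hc
    rw [zmod3_sum (fun j => (Finset.univ.filter (fun x => φ x = j)).card)] at hc
    have h0 : (Finset.univ.filter (fun x : G => φ x = (0 : ZMod 3))).card = (F 0).card := rfl
    have h1 : (Finset.univ.filter (fun x : G => φ x = (1 : ZMod 3))).card = (F 1).card := rfl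
    have h2 : (Finset.univ.filter (fun x : G => φ x = (2 : ZMod 3))).card = (F 2).card := rfl
    rw [h0, h1, h2, hFcard 0, hFcard 2] at hc
    omega
  have hF1 : (F 1).card = k' * (v / k) := by
    have h := hv3eq
    omega
  have hF1cast : ((F 1).card : ZMod 3) = (k' : ZMod 3) * 2 := by
    rw [hF1, Nat.cast_mul]
    congr 1
    have h2 : ((v / k : ℕ) : ZMod 3) = ((2 : ℕ) : ZMod 3) :=
      (ZMod.natCast_eq_natCast_iff _ _ _).mpr hvk
    rw [h2]; norm_num
  have hc00 : (k' : ZMod 3) ≠ 0 := by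
    rw [Ne, ZMod.natCast_eq_zero_iff]
    exact hk3'
  -- the two weighted sums, via the orbit lemma
  have hσinj : Function.Injective (fun B : Finset G => B.image (· + u)) :=
    Finset.image_injective (add_left_injective u)
  have hσmap : ∀ B ∈ 𝓑, B.image (· + u) ∈ 𝓑 := fun B hB => htrans B hB u
  have hinv : ∀ B ∈ 𝓑, (((B.image (· + u)) ∩ F 1).card : ZMod 3)
      = ((B ∩ F 1).card : ZMod 3) := by
    intro B hB
    rw [hcardtr B 1, sub_self]
    exact hcong B hB 0
  have hsum1 : ∑ B ∈ 𝓑, ((B ∩ F 1).card : ZMod 3)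
      = ∑ B ∈ 𝓑.filter (fun B => B.image (· + u) = B), ((B ∩ F 1).card : ZMod 3) :=
    sum_eq_sum_fixed_aux (fun B : Finset G => B.image (· + u)) hσinj
      (fun B => ((B ∩ F 1).card : ZMod 3)) 𝓑.card 𝓑 le_rfl hσmap
      (fun B hB => hσ3 B) hinv
  have hsum2 : ∑ B ∈ 𝓑, ((B ∩ F 1).card : ZMod 3) * ((B ∩ F 1).card : ZMod 3)
      = ∑ B ∈ 𝓑.filter (fun B => B.image (· + u) = B),
          ((B ∩ F 1).card : ZMod 3) * ((B ∩ F 1).card : ZMod 3) :=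
    sum_eq_sum_fixed_aux (fun B : Finset G => B.image (· + u)) hσinj
      (fun B => ((B ∩ F 1).card : ZMod 3) * ((B ∩ F 1).card : ZMod 3)) 𝓑.card 𝓑 le_rfl hσmap
      (fun B hB => hσ3 B) (fun B hB => by simp only [hinv B hB])
  have hfixval : ∀ B ∈ 𝓑.filter (fun B => B.image (· + u) = B),
      ((B ∩ F 1).card : ZMod 3) = (k' : ZMod 3) := by
    intro B hB
    rw [Finset.mem_filter] at hB
    exact hfixc B hB.1 hB.2
  have hNsum1 : ∑ B ∈ 𝓑.filter (fun B => B.image (· + u) = B), ((B ∩ F 1).card : ZMod 3)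
      = ((𝓑.filter (fun B => B.image (· + u) = B)).card : ZMod 3) * (k' : ZMod 3) := by
    rw [Finset.sum_congr rfl hfixval, Finset.sum_const, nsmul_eq_mul]
  have hNsum2 : ∑ B ∈ 𝓑.filter (fun B => B.image (· + u) = B),
        ((B ∩ F 1).card : ZMod 3) * ((B ∩ F 1).card : ZMod 3)
      = ((𝓑.filter (fun B => B.image (· + u) = B)).card : ZMod 3)
        * ((k' : ZMod 3) * (k' : ZMod 3)) := by
    rw [Finset.sum_congr rfl (fun B hB => by rw [hfixval B hB]), Finset.sum_const, nsmul_eq_mul]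
  -- evaluate the two sums by double counting
  have heval1 : ∑ B ∈ 𝓑, ((B ∩ F 1).card : ZMod 3) = (k' : ZMod 3) * 2 := by
    rw [← Nat.cast_sum, design_swap 𝓑 (F 1), Nat.cast_sum]
    rw [Finset.sum_congr rfl (fun x _ => hdeg x), Finset.sum_const, nsmul_eq_mul, mul_one]
    exact hF1cast
  have hd12 : ∀ x ∈ F 1, ∀ y ∈ F 2, x ≠ y := by
    intro x hx y hy hxy
    rw [hmemF] at hx hy
    rw [hxy] at hx
    rw [hx] at hy
    exact zmod3_one_ne_two hy
  have heval2 : ∑ B ∈ 𝓑, ((B ∩ F 1).card : ZMod 3) * ((B ∩ F 1).card : ZMod 3)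
      = ((k' : ZMod 3) * 2) * ((k' : ZMod 3) * 2) := by
    have hre : ∀ B ∈ 𝓑, ((B ∩ F 1).card : ZMod 3) * ((B ∩ F 1).card : ZMod 3)
        = (((B ∩ F 1).card * (B ∩ F 2).card : ℕ) : ZMod 3) := by
      intro B hB
      rw [Nat.cast_mul, hcong B hB 2]
    rw [Finset.sum_congr rfl hre, ← Nat.cast_sum]
    rw [design_pair_count 𝓑 hpair (F 1) (F 2) hd12]
    rw [Nat.cast_mul, hF1cast]
    congr 1
    rw [hFcard 2]
    exact hF1cast
  -- final contradiction in ZMod 3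
  exact zmod3_final _ _ hc00
    (by rw [← hNsum1, ← hsum1, heval1])
    (by rw [← hNsum2, ← hsum2, heval2])
end

section
/- If there exists an additive (G,k,λ) strong difference family on a finite abelian group G and an additive (H,k,μ) difference matrix over a finite abelian group H, then there exists an additive (G × H, k, λμ) strong difference family. -/
/-- From an additive `(G,k,λ)` strong difference family and an additive `(H,k,μ)`
difference matrix one obtains an additive `(G × H, k, λμ)` strong difference family. -/
theorem stmt_16 (G H : Type*) [AddCommGroup G] [Fintype G] [DecidableEq G]
    [AddCommGroup H] [Fintype H] [DecidableEq H]
    (k lam mu : ℕ) (hk : 2 ≤ k) (hlam : 1 ≤ lam) (hmu : 1 ≤ mu)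
    (s : ℕ) (B : Fin s → Fin k → G)
    (hSDF : ∀ g : G,
      (∑ h : Fin s, ((Finset.univ : Finset (Fin k × Fin k)).filter
        (fun p => p.1 ≠ p.2 ∧ B h p.1 - B h p.2 = g)).card) = lam)
    (hBadd : ∀ h : Fin s, ∑ i : Fin k, B h i = 0)
    (M : Fin k → Fin (mu * Fintype.card H) → H)
    (hDM : ∀ r t : Fin k, r ≠ t → ∀ h : H,
      ((Finset.univ : Finset (Fin (mu * Fintype.card H))).filter
        (fun c => M r c - M t c = h)).card = mu)
    (hMadd : ∀ c : Fin (mu * Fintype.card H), ∑ r : Fin k, M r c = 0) :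
    ∃ (s' : ℕ) (C : Fin s' → Fin k → G × H),
      (∀ g : G × H,
        (∑ h : Fin s', ((Finset.univ : Finset (Fin k × Fin k)).filter
          (fun p => p.1 ≠ p.2 ∧ C h p.1 - C h p.2 = g)).card) = lam * mu) ∧
      (∀ h : Fin s', ∑ i : Fin k, C h i = 0) := by
  classical
  refine ⟨s * (mu * Fintype.card H),
    fun j i => (B (finProdFinEquiv.symm j).1 i, M i (finProdFinEquiv.symm j).2), ?_, ?_⟩
  · intro g
    calc (∑ j : Fin (s * (mu * Fintype.card H)),
          ((Finset.univ : Finset (Fin k × Fin k)).filter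
          (fun p => p.1 ≠ p.2 ∧
            ((B (finProdFinEquiv.symm j).1 p.1, M p.1 (finProdFinEquiv.symm j).2) -
             (B (finProdFinEquiv.symm j).1 p.2, M p.2 (finProdFinEquiv.symm j).2)) = g)).card)
        = ∑ q : Fin s × Fin (mu * Fintype.card H),
          ((Finset.univ : Finset (Fin k × Fin k)).filter
          (fun p => p.1 ≠ p.2 ∧ (B q.1 p.1 - B q.1 p.2, M p.1 q.2 - M p.2 q.2) = g)).card := by
          rw [← Equiv.sum_comp finProdFinEquiv]
          simp [Prod.sub_def]
      _ = ∑ a : Fin s, ∑ c : Fin (mu * Fintype.card H), ∑ p : Fin k × Fin k,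
            if p.1 ≠ p.2 ∧ B a p.1 - B a p.2 = g.1 ∧ M p.1 c - M p.2 c = g.2
            then 1 else 0 := by
          rw [Fintype.sum_prod_type]
          refine Finset.sum_congr rfl fun a _ => Finset.sum_congr rfl fun c _ => ?_
          rw [Finset.card_filter]
          refine Finset.sum_congr rfl fun p _ => ?_
          congr 1
          simp [Prod.ext_iff, and_assoc]
      _ = ∑ a : Fin s, ∑ p : Fin k × Fin k,
            if p.1 ≠ p.2 ∧ B a p.1 - B a p.2 = g.1 then mu else 0 := by
          refine Finset.sum_congr rfl fun a _ => ?_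
          rw [Finset.sum_comm]
          refine Finset.sum_congr rfl fun p _ => ?_
          by_cases hp : p.1 ≠ p.2 ∧ B a p.1 - B a p.2 = g.1
          · rw [if_pos hp]
            have := hDM p.1 p.2 hp.1 g.2
            rw [Finset.card_filter] at this
            refine Eq.trans ?_ this
            refine Finset.sum_congr rfl fun c _ => ?_
            refine if_congr ?_ rfl rfl
            constructor
            · tauto
            · intro hc; exact ⟨hp.1, hp.2, hc⟩
          · rw [if_neg hp]
            rw [Finset.sum_eq_zero]
            intro c _
            rw [if_neg]
            tauto
      _ = ∑ a : Fin s, ((Finset.univ : Finset (Fin k × Fin k)).filter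
            (fun p => p.1 ≠ p.2 ∧ B a p.1 - B a p.2 = g.1)).card * mu := by
          refine Finset.sum_congr rfl fun a _ => ?_
          rw [Finset.card_filter, Finset.sum_mul]
          refine Finset.sum_congr rfl fun p _ => ?_
          split_ifs <;> simp
      _ = lam * mu := by rw [← Finset.sum_mul, hSDF]
  · intro j
    refine Prod.ext ?_ ?_
    · simpa [Prod.fst_sum] using hBadd (finProdFinEquiv.symm j).1
    · simpa [Prod.snd_sum] using hMadd (finProdFinEquiv.symm j).2
end

section
/- Let G be a zero-sum finite abelian group of order k admitting an additive (G,k,λ) strong difference family, let p be a prime dividing k, and let q > k be a power of p. Then there exists a (G × F_q)-super-regular 2-(kq, k, λ) design. -/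
open Finset

lemma sum_ne_zero_of_two_mod_four {G : Type} [AddCommGroup G] [Fintype G] [DecidableEq G]
    (h2 : 2 ∣ Fintype.card G) (h4 : ¬ 4 ∣ Fintype.card G) : ∑ g : G, g ≠ 0 := by
  haveI : Fact (Nat.Prime 2) := ⟨Nat.prime_two⟩
  obtain ⟨a, ha⟩ := exists_prime_addOrderOf_dvd_card (G := G) 2 h2
  have ha2 : a + a = 0 := by
    have := addOrderOf_nsmul_eq_zero a
    rw [ha, two_nsmul] at this; exact this
  have ha0 : a ≠ 0 := by
    intro h; rw [h, addOrderOf_zero] at ha; omega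
  have hnegs : ∀ c : G, c + c = 0 → -c = c := by
    intro c hc; rw [neg_eq_iff_add_eq_zero, hc]
  -- the 2-torsion is exactly {0, a}
  have hT : ∀ b : G, b + b = 0 → b = 0 ∨ b = a := by
    intro b hb
    by_contra hcon
    push_neg at hcon
    obtain ⟨hb0, hba⟩ := hcon
    have hab2 : (a + b) + (a + b) = 0 := by
      rw [add_add_add_comm, ha2, hb, add_zero]
    have hab0 : a + b ≠ 0 := by
      intro h
      have : b = -a := by rw [eq_neg_iff_add_eq_zero, add_comm]; exact h
      rw [hnegs a ha2] at this; exact hba this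
    have haba : a + b ≠ a := fun h => hb0 (by rwa [add_eq_left] at h)
    have habb : a + b ≠ b := fun h => ha0 (by rwa [add_eq_right] at h)
    set K : AddSubgroup G := {
      carrier := {0, a, b, a + b}
      zero_mem' := by simp
      add_mem' := by
        rintro x y (rfl|rfl|rfl|rfl) (rfl|rfl|rfl|rfl) <;>
          simp [Set.mem_insert_iff, ha2, hb, hab2, add_add_add_comm, add_comm, add_left_comm]
      neg_mem' := by
        rintro x (rfl|rfl|rfl|rfl) <;>
          simp [Set.mem_insert_iff, hnegs _ ha2, hnegs _ hb, hnegs _ hab2] } with hK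
    have hcard : Nat.card K = 4 := by
      have h1 : Nat.card K = Nat.card ({0, a, b, a + b} : Finset G) := by
        apply Nat.card_congr
        apply Equiv.subtypeEquivRight
        intro x
        constructor
        · intro hx
          rcases hx with rfl|rfl|rfl|rfl <;> simp [Finset.mem_insert]
        · intro hx
          simp only [Finset.mem_insert, Finset.mem_singleton] at hx
          rcases hx with rfl|rfl|rfl|rfl
          · exact K.zero_mem
          · exact Or.inr (Or.inl rfl)
          · exact Or.inr (Or.inr (Or.inl rfl))
          · exact Or.inr (Or.inr (Or.inr rfl))
      rw [h1, Nat.card_eq_finsetCard]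
      rw [card_insert_of_notMem (by simp [ha0.symm, hb0.symm, hab0.symm, Ne.symm]),
        card_insert_of_notMem (by
          simp only [Finset.mem_insert, Finset.mem_singleton]
          push_neg
          exact ⟨fun h => hba h.symm, fun h => haba h.symm⟩),
        card_insert_of_notMem (by simp [habb.symm, Ne.symm]), card_singleton]
    have hdvd := AddSubgroup.card_addSubgroup_dvd_card K
    rw [hcard, Nat.card_eq_fintype_card] at hdvd
    exact h4 hdvd
  -- now compute the sum
  have hsplit := Finset.sum_filter_add_sum_filter_not (univ : Finset G)
    (fun g => g + g = 0) (fun g => g)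
  have hright : ∑ g ∈ univ.filter (fun g : G => ¬ g + g = 0), g = 0 := by
    apply Finset.sum_involution (f := fun g : G => g) (g := fun c _ => -c)
    · intro c _; exact add_neg_cancel c
    · intro c hc _
      simp only [mem_filter, mem_univ, true_and] at hc
      intro h
      apply hc
      have := add_neg_cancel c
      rwa [h] at this
    · intro c hc
      simp only [mem_filter, mem_univ, true_and] at *
      intro h
      apply hc
      have h2 : -(c + c) = 0 := by rw [neg_add]; exact h
      rwa [neg_eq_zero] at h2
    · intro c _; exact neg_neg c
  have hleft : univ.filter (fun g : G => g + g = 0) = ({0, a} : Finset G) := by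
    ext g
    simp only [mem_filter, mem_univ, true_and, Finset.mem_insert, Finset.mem_singleton]
    constructor
    · exact hT g
    · rintro (rfl|rfl)
      · exact add_zero 0
      · exact ha2
  rw [← hsplit, hright, add_zero, hleft, Finset.sum_insert (by simp [ha0.symm, Ne.symm]),
    Finset.sum_singleton, zero_add]
  exact ha0

lemma exists_injective_zero_sum_aux {F : Type} [Field F] [Fintype F] [DecidableEq F]
    {S : Type} [AddCommGroup S] [Fintype S]
    (ψ : S →+ F) (hinj : Function.Injective ψ)
    (hsum : ∑ a : S, ψ a = 0)
    (hzero : ∀ w : F, Fintype.card S • w = 0)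
    {k : ℕ} (hdvd : Fintype.card S ∣ k) (hk : k < Fintype.card F) :
    ∃ x : Fin k → F, Function.Injective x ∧ ∑ i, x i = 0 := by
  classical
  obtain ⟨t, ht⟩ := hdvd
  set H : AddSubgroup F := ψ.range with hH
  letI : Fintype (F ⧸ H) := Fintype.ofFinite _
  have hcardH : Nat.card H = Fintype.card S :=
    (Nat.card_range_of_injective (f := ψ) hinj).trans (Nat.card_eq_fintype_card)
  have hcards : Nat.card F = Nat.card (F ⧸ H) * Nat.card H :=
    AddSubgroup.card_eq_card_quotient_mul_card_addSubgroup H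
  have htQ : t < Fintype.card (F ⧸ H) := by
    by_contra hle
    push_neg at hle
    have hSpos : 0 < Fintype.card S := Fintype.card_pos
    have : Nat.card F ≤ t * Fintype.card S := by
      rw [hcards, hcardH, Nat.card_eq_fintype_card]
      exact Nat.mul_le_mul_right _ hle
    rw [Nat.card_eq_fintype_card, mul_comm] at this
    rw [ht] at hk
    exact absurd this (not_le.mpr hk)
  obtain ⟨e⟩ : Nonempty (Fin t ↪ (F ⧸ H)) := by
    apply Function.Embedding.nonempty_of_card_le
    simpa using htQ.le
  have hcardprod : Fintype.card (Fin t × S) = k := by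
    simp [Fintype.card_prod, ht, mul_comm]
  obtain ⟨eq⟩ : Nonempty (Fin k ≃ Fin t × S) := by
    apply Fintype.card_eq.mp
    simp [hcardprod]
  set f : Fin t × S → F := fun z => (e z.1).out + ψ z.2 with hf
  have hmk : ∀ z : Fin t × S, QuotientAddGroup.mk' H (f z) = e z.1 := by
    intro z
    rw [hf]
    simp only [map_add]
    have h1 : QuotientAddGroup.mk' H ((e z.1).out) = e z.1 := by
      simp [QuotientAddGroup.mk'_apply, Quotient.out_eq]
    have h2 : QuotientAddGroup.mk' H (ψ z.2) = 0 := by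
      rw [QuotientAddGroup.mk'_apply, QuotientAddGroup.eq_zero_iff]
      exact ⟨z.2, rfl⟩
    rw [h1, h2, add_zero]
  have hfinj : Function.Injective f := by
    intro z1 z2 hz
    have h1 : e z1.1 = e z2.1 := by rw [← hmk z1, ← hmk z2, hz]
    have h11 : z1.1 = z2.1 := e.injective h1
    have h2 : ψ z1.2 = ψ z2.2 := by
      have : (e z1.1).out + ψ z1.2 = (e z1.1).out + ψ z2.2 := by
        conv_rhs => rw [h11]
        exact hz
      exact add_left_cancel this
    exact Prod.ext h11 (hinj h2)
  refine ⟨f ∘ eq, hfinj.comp eq.injective, ?_⟩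
  have : ∑ i : Fin k, f (eq i) = ∑ z : Fin t × S, f z :=
    Fintype.sum_equiv eq _ _ (fun i => rfl)
  rw [Function.comp_def, this, Fintype.sum_prod_type]
  have : ∀ u : Fin t, ∑ a : S, f (u, a) = 0 := by
    intro u
    rw [hf]
    simp only
    rw [Finset.sum_add_distrib, Finset.sum_const, card_univ, hzero, hsum, add_zero]
  simp [this]

lemma zmod_sum_eq_zero (p : ℕ) [NeZero p] (hp : p.Prime) (hodd : p ≠ 2) : ∑ j : ZMod p, j = 0 := by
  have h1 : ∑ j : ZMod p, j = ∑ j : ZMod p, -j :=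
    Fintype.sum_equiv (Equiv.neg (ZMod p)) _ _ (fun j => by simp)
  have h2 : ∑ j : ZMod p, -j = -∑ j : ZMod p, j := by rw [Finset.sum_neg_distrib]
  have h3 : (2 : ZMod p) * ∑ j : ZMod p, j = 0 := by
    rw [two_mul]
    nth_rewrite 2 [h1]
    rw [h2, add_neg_cancel]
  haveI : Fact p.Prime := ⟨hp⟩
  rcases mul_eq_zero.mp h3 with h | h
  · exfalso
    have := (ZMod.natCast_eq_zero_iff 2 p).mp (by exact_mod_cast h)
    rcases (Nat.prime_dvd_prime_iff_eq hp Nat.prime_two).mp this with rfl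
    exact hodd rfl
  · exact h

lemma exists_injective_zero_sum {F : Type} [Field F] [Fintype F] [DecidableEq F]
    (p : ℕ) (hp : p.Prime) [CharP F p]
    {k : ℕ} (hpk : p ∣ k) (h4 : p = 2 → 4 ∣ k) (hk : k < Fintype.card F) :
    ∃ x : Fin k → F, Function.Injective x ∧ ∑ i, x i = 0 := by
  classical
  rcases Nat.eq_zero_or_pos k with rfl | hkpos
  · exact ⟨Fin.elim0, fun a => a.elim0, by simp⟩
  by_cases h2 : p = 2
  · subst h2
    -- use S = ZMod 2 × ZMod 2
    have hcard3 : 2 < Fintype.card F := by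
      have : 4 ≤ k := Nat.le_of_dvd hkpos (h4 rfl)
      omega
    obtain ⟨b, hb⟩ : ∃ b : F, b ∉ ({0, 1} : Finset F) := by
      by_contra hcon
      push_neg at hcon
      have : (univ : Finset F) ⊆ {0, 1} := fun x _ => hcon x
      have := Finset.card_le_card this
      simp only [card_univ] at this
      have h01 : ({0, 1} : Finset F).card ≤ 2 := Finset.card_insert_le _ _ |>.trans (by simp)
      omega
    simp only [Finset.mem_insert, Finset.mem_singleton, not_or] at hb
    obtain ⟨hb0, hb1⟩ := hb
    set c2 : ZMod 2 →+* F := ZMod.castHom dvd_rfl F with hc2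
    set ψ : ZMod 2 × ZMod 2 →+ F :=
      (c2.toAddMonoidHom).coprod ((AddMonoidHom.mulRight b).comp c2.toAddMonoidHom) with hψ
    have hψapp : ∀ z : ZMod 2 × ZMod 2, ψ z = c2 z.1 + c2 z.2 * b := fun z => rfl
    have hchar2 : (2 : F) = 0 := by
      have := CharP.cast_eq_zero F 2
      exact_mod_cast this
    have hinj : Function.Injective ψ := by
      rw [injective_iff_map_eq_zero]
      intro z hz
      have hcases : ∀ j : ZMod 2, j = 0 ∨ j = 1 := by decide
      rw [hψapp] at hz
      rcases hcases z.1 with h1 | h1 <;> rcases hcases z.2 with hh2 | hh2 <;>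
        rw [h1, hh2] at hz <;> simp only [map_zero, map_one, zero_add, add_zero,
          zero_mul, one_mul] at hz
      · exact Prod.ext h1 hh2
      · exact absurd hz hb0
      · exact absurd hz one_ne_zero
      · exfalso
        apply hb1
        have : b = -1 := by linear_combination hz
        rw [this]
        have : (1 : F) + 1 = 0 := by rw [← hchar2]; norm_num
        linear_combination -this
    apply exists_injective_zero_sum_aux ψ hinj
    · rw [← map_sum]
      have : ∑ a : ZMod 2 × ZMod 2, a = 0 := by decide
      rw [this, map_zero]
    · intro w
      have : Fintype.card (ZMod 2 × ZMod 2) = 4 := by simp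
      rw [this]
      have h4' : (4 : F) = 0 := by
        have : (4 : F) = 2 * 2 := by norm_num
        rw [this, hchar2, zero_mul]
      rw [nsmul_eq_mul]
      push_cast
      rw [h4', zero_mul]
    · have : Fintype.card (ZMod 2 × ZMod 2) = 4 := by simp
      rw [this]; exact h4 rfl
    · exact hk
  · -- p odd
    set ψ : ZMod p →+ F := (ZMod.castHom dvd_rfl F).toAddMonoidHom with hψ
    haveI : NeZero p := ⟨hp.ne_zero⟩
    have hinj : Function.Injective ψ := ZMod.castHom_injective F
    apply exists_injective_zero_sum_aux ψ hinj
    · rw [← map_sum, zmod_sum_eq_zero p hp h2, map_zero]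
    · intro w
      rw [ZMod.card, nsmul_eq_mul, CharP.cast_eq_zero F p, zero_mul]
    · rw [ZMod.card]; exact hpk
    · exact hk

lemma charP_of_card_pow {F : Type} [Field F] [Fintype F]
    (p m : ℕ) (hp : p.Prime) (hm : 1 ≤ m) (hF : Fintype.card F = p ^ m) : CharP F p := by
  set r := ringChar F with hr
  haveI : CharP F r := ringChar.charP F
  have hrprime : r.Prime := CharP.char_is_prime F r
  obtain ⟨n, hn, hcard⟩ := FiniteField.card F r
  have : p = r := by
    have hdvd : p ∣ r ^ (n : ℕ) := by
      rw [← hcard, hF]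
      exact dvd_pow_self p (by omega)
    have := (Nat.Prime.dvd_of_dvd_pow hp hdvd)
    exact (Nat.prime_dvd_prime_iff_eq hp hrprime).mp this
  rw [this]
  exact ringChar.charP F

lemma construction {G : Type} [AddCommGroup G] [Fintype G] [DecidableEq G]
    {F : Type} [Field F] [Fintype F] [DecidableEq F]
    (k lam : ℕ) (hlam : 1 ≤ lam)
    (hGcard : Fintype.card G = k) (hGzs : ∑ g : G, g = 0)
    (s : ℕ) (B : Fin s → Fin k → G)
    (hSDF : ∀ g : G,
      (∑ h : Fin s, ((Finset.univ : Finset (Fin k × Fin k)).filter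
        (fun p => p.1 ≠ p.2 ∧ B h p.1 - B h p.2 = g)).card) = lam)
    (hadd : ∀ h : Fin s, ∑ i : Fin k, B h i = 0)
    (hkF : (k : F) = 0)
    (x : Fin k → F) (hxinj : Function.Injective x) (hxsum : ∑ i, x i = 0) :
    ∃ 𝓑 : Multiset (Finset (G × F)),
      (∀ Bl ∈ 𝓑, Bl.card = k ∧ ∑ x ∈ Bl, x = 0) ∧
      (∀ x y : G × F, x ≠ y → 𝓑.countP (fun Bl => x ∈ Bl ∧ y ∈ Bl) = lam) ∧
      (∀ g : G × F, 𝓑.map (fun Bl => Bl.image (· + g)) = 𝓑) := by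
  classical
  set ι : Fin s × {c : F // c ≠ 0} × G × F → Fin k → G × F :=
    fun z i => (B z.1 i + z.2.2.1, (z.2.1 : F) * x i + z.2.2.2) with hι
  have hιinj : ∀ z, Function.Injective (ι z) := by
    intro z i j hij
    have h2 : (z.2.1 : F) * x i + z.2.2.2 = (z.2.1 : F) * x j + z.2.2.2 :=
      congrArg Prod.snd hij
    have := mul_left_cancel₀ z.2.1.2 (add_right_cancel h2)
    exact hxinj this
  set Dblk : Fin s × {c : F // c ≠ 0} × G × F → Finset (G × F) :=
    fun z => Finset.image (ι z) Finset.univ with hD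
  set Cblk : F → Finset (G × F) := fun y => Finset.image (fun g => (g, y)) Finset.univ with hC
  have hCinj : ∀ y : F, Function.Injective (fun g : G => (g, y)) := by
    intro y g1 g2 h12; exact congrArg Prod.fst h12
  refine ⟨(Finset.univ.val.map Dblk) + lam • (Finset.univ.val.map Cblk), ?_, ?_, ?_⟩
  · -- block sizes and zero sums
    intro Bl hBl
    rw [Multiset.mem_add] at hBl
    rcases hBl with hBl | hBl
    · rw [Multiset.mem_map] at hBl
      obtain ⟨z, -, rfl⟩ := hBl
      constructor
      · rw [hD]
        simp only
        rw [Finset.card_image_of_injective _ (hιinj z), card_univ, Fintype.card_fin]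
      · rw [hD]
        simp only
        rw [Finset.sum_image (fun i _ j _ hij => hιinj z hij)]
        apply Prod.ext
        · rw [Prod.fst_sum]
          simp only [hι]
          rw [Finset.sum_add_distrib, hadd, Finset.sum_const, card_univ, Fintype.card_fin,
            zero_add, ← hGcard, card_nsmul_eq_zero]
          rfl
        · rw [Prod.snd_sum]
          simp only [hι]
          rw [Finset.sum_add_distrib, ← Finset.mul_sum, hxsum, mul_zero, Finset.sum_const,
            card_univ, Fintype.card_fin, zero_add, nsmul_eq_mul, hkF, zero_mul]
          rfl
    · rw [Multiset.mem_nsmul] at hBl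
      rw [Multiset.mem_map] at hBl
      obtain ⟨y, -, rfl⟩ := hBl.2
      constructor
      · rw [hC]
        simp only
        rw [Finset.card_image_of_injective _ (hCinj y), card_univ, hGcard]
      · rw [hC]
        simp only
        rw [Finset.sum_image (fun i _ j _ hij => hCinj y hij)]
        apply Prod.ext
        · rw [Prod.fst_sum]
          simp only
          rw [hGzs]
          rfl
        · rw [Prod.snd_sum]
          simp only
          rw [Finset.sum_const, card_univ, hGcard, nsmul_eq_mul, hkF, zero_mul]
          rfl
  · -- counting
    intro a b hab
    have hmemD : ∀ (w : G × F) z, w ∈ Dblk z ↔ ∃ i, ι z i = w := by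
      intro w z
      rw [hD]
      simp [Finset.mem_image]
    have hmemC : ∀ (w : G × F) y, w ∈ Cblk y ↔ w.2 = y := by
      intro w y
      rw [hC]
      simp only [Finset.mem_image, Finset.mem_univ, true_and]
      constructor
      · rintro ⟨g, rfl⟩; rfl
      · intro h; exact ⟨w.1, by rw [← h]⟩
    rw [Multiset.countP_add, Multiset.countP_nsmul, Multiset.countP_map, Multiset.countP_map]
    have hcards : ∀ {α : Type} [Fintype α] (p : α → Prop) [DecidablePred p],
        Multiset.card (Multiset.filter p (univ : Finset α).val) = (univ.filter p).card := by
      intro α _ p _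
      rw [Finset.card_def, Finset.filter_val]
    rw [hcards, hcards]
    by_cases hcase : a.2 = b.2
    · -- second coordinates equal: only coset blocks count
      have hD0 : (univ.filter fun z => a ∈ Dblk z ∧ b ∈ Dblk z).card = 0 := by
        rw [Finset.card_eq_zero, Finset.filter_eq_empty_iff]
        rintro z - ⟨ha, hb⟩
        rw [hmemD] at ha hb
        obtain ⟨i, hi⟩ := ha
        obtain ⟨j, hj⟩ := hb
        have hsnd : (ι z i).2 = (ι z j).2 := by rw [hi, hj, hcase]
        rw [hι] at hsnd
        simp only at hsnd
        have hij : i = j := hxinj (mul_left_cancel₀ z.2.1.2 (add_right_cancel hsnd))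
        apply hab
        rw [← hi, ← hj, hij]
      have hC1 : (univ.filter fun y => a ∈ Cblk y ∧ b ∈ Cblk y).card = 1 := by
        have : (univ.filter fun y => a ∈ Cblk y ∧ b ∈ Cblk y) = {a.2} := by
          ext y
          simp only [Finset.mem_filter, Finset.mem_univ, true_and, Finset.mem_singleton,
            hmemC]
          constructor
          · rintro ⟨rfl, -⟩; rfl
          · rintro rfl; exact ⟨rfl, hcase.symm⟩
        rw [this, Finset.card_singleton]
      rw [hD0, hC1, mul_one, zero_add]
    · -- second coordinates differ: only difference blocks count
      have hC0 : (univ.filter fun y => a ∈ Cblk y ∧ b ∈ Cblk y).card = 0 := by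
        rw [Finset.card_eq_zero, Finset.filter_eq_empty_iff]
        rintro y - ⟨ha, hb⟩
        rw [hmemC] at ha hb
        exact hcase (ha.trans hb.symm)
      have habF : a.2 - b.2 ≠ 0 := sub_ne_zero.mpr hcase
      have key : (univ.filter fun z => a ∈ Dblk z ∧ b ∈ Dblk z).card
          = ((univ : Finset (Fin s × Fin k × Fin k)).filter
              (fun w => w.2.1 ≠ w.2.2 ∧ B w.1 w.2.1 - B w.1 w.2.2 = a.1 - b.1)).card := by
        symm
        apply Finset.card_bij (i := fun w hw =>
          (w.1, ⟨(a.2 - b.2) * (x w.2.1 - x w.2.2)⁻¹, by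
            have hne : w.2.1 ≠ w.2.2 := (Finset.mem_filter.mp hw).2.1
            have hxij : x w.2.1 - x w.2.2 ≠ 0 := sub_ne_zero.mpr (fun e => hne (hxinj e))
            exact mul_ne_zero habF (inv_ne_zero hxij)⟩,
            a.1 - B w.1 w.2.1,
            a.2 - ((a.2 - b.2) * (x w.2.1 - x w.2.2)⁻¹) * x w.2.1))
        · -- maps to
          intro w hw
          obtain ⟨-, hne, hdiff⟩ := Finset.mem_filter.mp hw
          have hxij : x w.2.1 - x w.2.2 ≠ 0 := sub_ne_zero.mpr fun e => hne (hxinj e)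
          rw [Finset.mem_filter]
          refine ⟨Finset.mem_univ _, ?_, ?_⟩
          · rw [hmemD]
            refine ⟨w.2.1, ?_⟩
            rw [hι]
            apply Prod.ext
            · show B w.1 w.2.1 + (a.1 - B w.1 w.2.1) = a.1
              abel
            · show (a.2 - b.2) * (x w.2.1 - x w.2.2)⁻¹ * x w.2.1 +
                (a.2 - (a.2 - b.2) * (x w.2.1 - x w.2.2)⁻¹ * x w.2.1) = a.2
              ring
          · rw [hmemD]
            refine ⟨w.2.2, ?_⟩
            rw [hι]
            apply Prod.ext
            · show B w.1 w.2.2 + (a.1 - B w.1 w.2.1) = b.1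
              have h1 : B w.1 w.2.2 + (a.1 - B w.1 w.2.1)
                  = a.1 - (B w.1 w.2.1 - B w.1 w.2.2) := by abel
              rw [h1, hdiff]
              exact sub_sub_cancel _ _
            · show (a.2 - b.2) * (x w.2.1 - x w.2.2)⁻¹ * x w.2.2 +
                (a.2 - (a.2 - b.2) * (x w.2.1 - x w.2.2)⁻¹ * x w.2.1) = b.2
              field_simp
              ring
        · -- injective
          intro w1 hw1 w2 hw2 heq
          obtain ⟨-, hne1, -⟩ := Finset.mem_filter.mp hw1
          obtain ⟨-, hne2, -⟩ := Finset.mem_filter.mp hw2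
          have hxij1 : x w1.2.1 - x w1.2.2 ≠ 0 := sub_ne_zero.mpr fun e => hne1 (hxinj e)
          have hxij2 : x w2.2.1 - x w2.2.2 ≠ 0 := sub_ne_zero.mpr fun e => hne2 (hxinj e)
          rw [Prod.ext_iff] at heq
          obtain ⟨h1, heq⟩ := heq
          rw [Prod.ext_iff] at heq
          obtain ⟨hcc', heq⟩ := heq
          rw [Prod.ext_iff] at heq
          obtain ⟨hgg, hyy⟩ := heq
          simp only at h1 hcc' hgg hyy
          have hcc : (a.2 - b.2) * (x w1.2.1 - x w1.2.2)⁻¹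
              = (a.2 - b.2) * (x w2.2.1 - x w2.2.2)⁻¹ := Subtype.ext_iff.mp hcc'
          have hc0ne : (a.2 - b.2) * (x w1.2.1 - x w1.2.2)⁻¹ ≠ 0 :=
            mul_ne_zero habF (inv_ne_zero hxij1)
          have hx1 : x w1.2.1 = x w2.2.1 := by
            rw [← hcc] at hyy
            exact mul_left_cancel₀ hc0ne (sub_right_inj.mp hyy)
          have hieq : w1.2.1 = w2.2.1 := hxinj hx1
          have hinv : (x w1.2.1 - x w1.2.2)⁻¹ = (x w2.2.1 - x w2.2.2)⁻¹ :=
            mul_left_cancel₀ habF hcc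
          have hsub : x w1.2.1 - x w1.2.2 = x w2.2.1 - x w2.2.2 := inv_injective hinv
          have hx2 : x w1.2.2 = x w2.2.2 := by
            rw [hx1] at hsub
            exact sub_right_inj.mp hsub
          have hjeq : w1.2.2 = w2.2.2 := hxinj hx2
          exact Prod.ext h1 (Prod.ext hieq hjeq)
        · -- surjective
          rintro ⟨h, c, g, y⟩ hz
          rw [Finset.mem_filter] at hz
          obtain ⟨-, hza, hzb⟩ := hz
          rw [hmemD] at hza hzb
          obtain ⟨i0, hi0⟩ := hza
          obtain ⟨j0, hj0⟩ := hzb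
          rw [hι] at hi0 hj0
          have hi1 : B h i0 + g = a.1 := congrArg Prod.fst hi0
          have hi2 : (c : F) * x i0 + y = a.2 := congrArg Prod.snd hi0
          have hj1 : B h j0 + g = b.1 := congrArg Prod.fst hj0
          have hj2 : (c : F) * x j0 + y = b.2 := congrArg Prod.snd hj0
          have hij : i0 ≠ j0 := by
            rintro rfl
            exact hab (hi0.symm.trans hj0)
          have hxij : x i0 - x j0 ≠ 0 := sub_ne_zero.mpr fun e => hij (hxinj e)
          have hsub2 : a.2 - b.2 = (c : F) * (x i0 - x j0) := by
            rw [← hi2, ← hj2]; ring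
          have hc0 : (a.2 - b.2) * (x i0 - x j0)⁻¹ = (c : F) := by
            rw [hsub2]
            field_simp
          refine ⟨(h, i0, j0), Finset.mem_filter.mpr ⟨Finset.mem_univ _, hij, ?_⟩, ?_⟩
          · show B h i0 - B h j0 = a.1 - b.1
            rw [← hi1, ← hj1]; abel
          · apply Prod.ext
            · rfl
            apply Prod.ext
            · exact Subtype.ext (by simpa using hc0)
            apply Prod.ext
            · show a.1 - B h i0 = g
              rw [← hi1]
              exact add_sub_cancel_left _ _
            · show a.2 - (a.2 - b.2) * (x i0 - x j0)⁻¹ * x i0 = y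
              rw [hc0, ← hi2]
              exact add_sub_cancel_left _ _
      rw [hC0, mul_zero, add_zero, key]
      -- fiberwise count
      have hfib : ((univ : Finset (Fin s × Fin k × Fin k)).filter
              (fun w => w.2.1 ≠ w.2.2 ∧ B w.1 w.2.1 - B w.1 w.2.2 = a.1 - b.1)).card
          = ∑ h : Fin s, ((univ : Finset (Fin k × Fin k)).filter
              (fun pr => pr.1 ≠ pr.2 ∧ B h pr.1 - B h pr.2 = a.1 - b.1)).card := by
        rw [Finset.card_filter]
        rw [Fintype.sum_prod_type]
        apply Finset.sum_congr rfl
        intro h _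
        rw [Finset.card_filter]
      rw [hfib, hSDF (a.1 - b.1)]
  · -- translation invariance
    intro t
    rw [Multiset.map_add, Multiset.map_nsmul]
    congr 1
    · rw [Multiset.map_map]
      set σ : (Fin s × {c : F // c ≠ 0} × G × F) ≃ (Fin s × {c : F // c ≠ 0} × G × F) :=
        (Equiv.refl _).prodCongr ((Equiv.refl _).prodCongr
          ((Equiv.addRight t.1).prodCongr (Equiv.addRight t.2))) with hσ
      have hcomm : ∀ z, ((fun Bl => Finset.image (· + t) Bl) ∘ Dblk) z = Dblk (σ z) := by
        rintro ⟨h, c, g, y⟩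
        simp only [Function.comp_apply, hD, Finset.image_image]
        apply Finset.image_congr
        intro i _
        simp only [Function.comp_apply, hι, hσ, Equiv.prodCongr_apply, Equiv.coe_refl,
          Prod.map_apply, id_eq, Equiv.coe_addRight, Prod.mk_add_mk]
        apply Prod.ext <;> simp [add_assoc]
      calc Finset.univ.val.map ((fun Bl => Finset.image (· + t) Bl) ∘ Dblk)
          = Finset.univ.val.map (Dblk ∘ σ) := by
            apply Multiset.map_congr rfl
            intro z _
            exact hcomm z
        _ = (Finset.univ.val.map σ).map Dblk := by rw [Multiset.map_map]
        _ = Finset.univ.val.map Dblk := by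
            congr 1
            have := Finset.map_univ_equiv σ
            calc Finset.univ.val.map ⇑σ = (Finset.univ.map σ.toEmbedding).val := rfl
              _ = Finset.univ.val := by rw [this]
    · congr 1
      rw [Multiset.map_map]
      have hcomm : ∀ y, ((fun Bl => Finset.image (· + t) Bl) ∘ Cblk) y = Cblk (y + t.2) := by
        intro y
        simp only [Function.comp_apply, hC, Finset.image_image]
        have h1 : ((· + t) ∘ (fun g : G => (g, y))) = (fun g : G => (g, y + t.2)) ∘ (· + t.1) := by
          funext g
          rfl
        rw [h1, ← Finset.image_image]
        congr 1
        exact Finset.image_univ_of_surjective (fun g => ⟨g - t.1, by simp⟩)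
      calc Finset.univ.val.map ((fun Bl => Finset.image (· + t) Bl) ∘ Cblk)
          = Finset.univ.val.map (Cblk ∘ (Equiv.addRight t.2)) := by
            apply Multiset.map_congr rfl
            intro y _
            exact hcomm y
        _ = (Finset.univ.val.map (Equiv.addRight t.2)).map Cblk := by rw [Multiset.map_map]
        _ = Finset.univ.val.map Cblk := by
            congr 1
            have := Finset.map_univ_equiv (Equiv.addRight t.2)
            calc Finset.univ.val.map ⇑(Equiv.addRight t.2)
                = (Finset.univ.map (Equiv.addRight t.2).toEmbedding).val := rfl
              _ = Finset.univ.val := by rw [this]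


/-- If `G` is a zero-sum abelian group of order `k` admitting an additive `(G,k,λ)`
strong difference family, `p` is a prime dividing `k`, and `q > k` is a power of `p`,
then there exists a `(G × F_q)`-super-regular 2-(kq, k, λ) design (blocks counted with
multiplicity). -/
theorem stmt_19 (k lam : ℕ) (hlam : 1 ≤ lam)
    (G : Type) [AddCommGroup G] [Fintype G] [DecidableEq G]
    (hGcard : Fintype.card G = k) (hGzs : ∑ g : G, g = 0)
    (s : ℕ) (B : Fin s → Fin k → G)
    (hSDF : ∀ g : G,
      (∑ h : Fin s, ((Finset.univ : Finset (Fin k × Fin k)).filter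
        (fun p => p.1 ≠ p.2 ∧ B h p.1 - B h p.2 = g)).card) = lam)
    (hadd : ∀ h : Fin s, ∑ i : Fin k, B h i = 0)
    (p : ℕ) (hp : p.Prime) (hpk : p ∣ k)
    (q : ℕ) (hq : ∃ m : ℕ, 1 ≤ m ∧ q = p ^ m) (hqk : k < q)
    (F : Type) [Field F] [Fintype F] [DecidableEq F] (hF : Fintype.card F = q) :
    ∃ 𝓑 : Multiset (Finset (G × F)),
      (∀ Bl ∈ 𝓑, Bl.card = k ∧ ∑ x ∈ Bl, x = 0) ∧
      (∀ x y : G × F, x ≠ y → 𝓑.countP (fun Bl => x ∈ Bl ∧ y ∈ Bl) = lam) ∧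
      (∀ g : G × F, 𝓑.map (fun Bl => Bl.image (· + g)) = 𝓑) := by
  obtain ⟨m, hm, rfl⟩ := hq
  haveI : CharP F p := charP_of_card_pow p m hp hm hF
  have h4 : p = 2 → 4 ∣ k := by
    intro h2
    subst h2
    by_contra h4
    exact sum_ne_zero_of_two_mod_four (G := G)
      (by rw [hGcard]; exact hpk) (by rw [hGcard]; exact h4) hGzs
  obtain ⟨x, hxinj, hxsum⟩ := exists_injective_zero_sum p hp hpk h4 (by rw [hF]; exact hqk)
  have hkF : (k : F) = 0 := (CharP.cast_eq_zero_iff F p k).mpr hpk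
  exact construction k lam hlam hGcard hGzs s B hSDF hadd hkF x hxinj hxsum
end
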